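/- arXiv:math-ph/0511030 — 7 statements merged into one kernel-verified Lean document; each statement's English description precedes it below -/
import Mathlib

section
/- (Fermionic Bogolubov transformations) Let (Y, α) be an even-dimensional real Hilbert space and let φ be an irreducible representation of the CAR over (Y, α) on a complex Hilbert space H. Let r : Y → Y be an orthogonal transformation (a linear map preserving α). Then: (a) there exists a unitary operator U on H such that U φ(y) U* = φ(ry) for all y ∈ Y; (b) U is unique up to a phase factor: if U and U' both have this property, then there exists λ ∈ ℂ with |λ| = 1 and U' = λ U. -/
set_option linter.unusedSectionVars false
set_option linter.unusedVariables false
set_option maxHeartbeats 2000000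

open Submodule Module

section Aux
variable {Y : Type*} [NormedAddCommGroup Y] [InnerProductSpace ℝ Y]
    {H : Type*} [NormedAddCommGroup H] [InnerProductSpace ℂ H] [CompleteSpace H]
    (φ : Y →ₗ[ℝ] (H →L[ℂ] H))
    (hCAR : ∀ y₁ y₂, φ y₁ * φ y₂ + φ y₂ * φ y₁ =
      (2 * (inner ℝ y₁ y₂ : ℝ)) • (1 : H →L[ℂ] H))

include hCAR

lemma car_sq (y : Y) : φ y * φ y = ((inner ℝ y y : ℝ)) • (1 : H →L[ℂ] H) := by
  have h := hCAR y y
  have h2 : (2:ℝ) • (φ y * φ y) = (2:ℝ) • (((inner ℝ y y : ℝ)) • (1 : H →L[ℂ] H)) := by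
    rw [two_smul, h, smul_smul]
  exact smul_right_injective _ (two_ne_zero) h2

lemma car_sq_one {v : Y} (hv : ‖v‖ = 1) : φ v * φ v = 1 := by
  rw [car_sq φ hCAR v, real_inner_self_eq_norm_sq, hv]
  norm_num

lemma car_unit_mem {v : Y} (hsa : ∀ y, IsSelfAdjoint (φ y)) (hv : ‖v‖ = 1) :
    φ v ∈ unitary (H →L[ℂ] H) := by
  rw [Unitary.mem_iff, (hsa v).star_eq, car_sq_one φ hCAR hv]
  exact ⟨rfl, rfl⟩

lemma car_conj {v : Y} (hv : ‖v‖ = 1) (z : Y) :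
    φ v * φ z * φ v = φ ((2 * (inner ℝ v z : ℝ)) • v - z) := by
  have h := hCAR v z
  have h1 : φ v * φ z = (2 * (inner ℝ v z : ℝ)) • (1 : H →L[ℂ] H) - φ z * φ v := by
    rw [← h]; abel
  calc φ v * φ z * φ v
      = ((2 * (inner ℝ v z : ℝ)) • (1 : H →L[ℂ] H) - φ z * φ v) * φ v := by rw [h1]
    _ = (2 * (inner ℝ v z : ℝ)) • φ v - φ z * (φ v * φ v) := by
        rw [sub_mul, smul_mul_assoc, one_mul, mul_assoc]
    _ = (2 * (inner ℝ v z : ℝ)) • φ v - φ z := by rw [car_sq_one φ hCAR hv, mul_one]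
    _ = φ ((2 * (inner ℝ v z : ℝ)) • v - z) := by rw [map_sub, map_smul]

end Aux

lemma refl_unit_apply {Y : Type*} [NormedAddCommGroup Y] [InnerProductSpace ℝ Y]
    [FiniteDimensional ℝ Y] {v : Y} (hv : ‖v‖ = 1) (z : Y) :
    (reflection ((ℝ ∙ v)ᗮ)) z = z - (2 * (inner ℝ v z : ℝ)) • v := by
  rw [reflection_orthogonal_apply, reflection_singleton_apply, hv]
  push_cast
  rw [one_pow, div_one, neg_sub, two_smul]
  module


section Main
variable {Y : Type*} [NormedAddCommGroup Y] [InnerProductSpace ℝ Y] [FiniteDimensional ℝ Y]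
    {H : Type*} [NormedAddCommGroup H] [InnerProductSpace ℂ H] [CompleteSpace H]
    (φ : Y →ₗ[ℝ] (H →L[ℂ] H))
    (hsa : ∀ y, IsSelfAdjoint (φ y))
    (hCAR : ∀ y₁ y₂, φ y₁ * φ y₂ + φ y₂ * φ y₁ =
      (2 * (inner ℝ y₁ y₂ : ℝ)) • (1 : H →L[ℂ] H))

include hsa hCAR

lemma car_prod (L : List Y) (hL : ∀ v ∈ L, ‖v‖ = 1) :
    (L.map fun v => φ v).prod ∈ unitary (H →L[ℂ] H) ∧
    ∀ z : Y, (L.map fun v => φ v).prod * φ z * star (L.map fun v => φ v).prod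
      = φ (((-1:ℝ)^L.length) • ((L.map fun v => reflection ((ℝ ∙ v)ᗮ)).prod z)) := by
  induction L with
  | nil =>
    constructor
    · simpa using one_mem (unitary (H →L[ℂ] H))
    · intro z; simp
  | cons v L IH =>
    have hv : ‖v‖ = 1 := hL v (List.mem_cons_self)
    obtain ⟨hPu, hPc⟩ := IH (fun w hw => hL w (List.mem_cons_of_mem v hw))
    set P := (L.map fun v => φ v).prod with hP
    have hmem : φ v * P ∈ unitary (H →L[ℂ] H) :=
      mul_mem (car_unit_mem φ hCAR hsa hv) hPu
    refine ⟨by simpa using hmem, fun z => ?_⟩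
    have hprod : ((v :: L).map fun v => φ v).prod = φ v * P := by
      simp [List.map_cons, List.prod_cons, hP]
    have hstar : star (φ v * P) = star P * φ v := by
      rw [star_mul, (hsa v).star_eq]
    rw [hprod, hstar]
    have key : φ v * P * φ z * (star P * φ v) = φ v * (P * φ z * star P) * φ v := by
      simp only [mul_assoc]
    rw [key, hPc z]
    set w := ((L.map fun v => reflection ((ℝ ∙ v)ᗮ)).prod z) with hw
    rw [map_smul]
    have : φ v * ((-1:ℝ)^L.length • φ w) * φ v
        = ((-1:ℝ)^L.length) • (φ v * φ w * φ v) := by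
      simp [mul_smul_comm, smul_mul_assoc]
    rw [this, car_conj φ hCAR hv w, ← map_smul]
    congr 1
    have hre : ((v :: L).map fun u => reflection ((ℝ ∙ u)ᗮ)).prod z
        = reflection ((ℝ ∙ v)ᗮ) w := by
      rw [List.map_cons, List.prod_cons, hw]
      rfl
    rw [hre, refl_unit_apply hv w, List.length_cons, pow_succ]
    module
end Main

section NegId
variable {Y : Type*} [NormedAddCommGroup Y] [InnerProductSpace ℝ Y] [FiniteDimensional ℝ Y]
  {n : ℕ} (B : OrthonormalBasis (Fin n) ℝ Y)

lemma refl_basis_list (L : List (Fin n)) (hL : L.Nodup) (j : Fin n) :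
    ((L.map fun i => reflection ((ℝ ∙ (B i))ᗮ)).prod) (B j)
      = if j ∈ L then -(B j) else B j := by
  induction L with
  | nil => simp
  | cons i L IH =>
    have hnd := hL.of_cons
    have hi : i ∉ L := (List.nodup_cons.mp hL).1
    have hstep : ∀ x : Fin n, (reflection ((ℝ ∙ (B i))ᗮ)) (B x)
        = if x = i then -(B x) else B x := by
      intro x
      rw [refl_unit_apply (B.orthonormal.1 i), orthonormal_iff_ite.mp B.orthonormal i x]
      by_cases h : x = i
      · subst h; simp only [if_pos rfl, if_true, eq_self_iff_true, mul_one]; rw [two_smul]; abel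
      · simp [Ne.symm h, h]
    rw [List.map_cons, List.prod_cons]
    have : ((reflection ((ℝ ∙ (B i))ᗮ)) * (L.map fun i => reflection ((ℝ ∙ (B i))ᗮ)).prod) (B j)
        = (reflection ((ℝ ∙ (B i))ᗮ)) (((L.map fun i => reflection ((ℝ ∙ (B i))ᗮ)).prod) (B j)) := rfl
    rw [this, IH hnd]
    by_cases hjL : j ∈ L
    · have hji : j ≠ i := fun h => hi (h ▸ hjL)
      simp [hjL, map_neg, hstep j, hji, List.mem_cons]
    · by_cases hji : j = i
      · subst hji; simp [hjL, hstep j]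
      · simp [hjL, hstep j, hji, List.mem_cons]

lemma refl_basis_neg_one (z : Y) (hn : n = finrank ℝ Y) :
    (((List.finRange n).map fun i => reflection ((ℝ ∙ (B i))ᗮ)).prod) z = -z := by
  have hbasis : ∀ j, (((List.finRange n).map fun i => reflection ((ℝ ∙ (B i))ᗮ)).prod) (B j) = -(B j) := by
    intro j
    rw [refl_basis_list B _ (List.nodup_finRange n) j]
    simp [List.mem_finRange]
  set f := (((List.finRange n).map fun i => reflection ((ℝ ∙ (B i))ᗮ)).prod)
  have : f.toLinearEquiv.toLinearMap = -(LinearMap.id (R := ℝ) (M := Y)) :=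
    B.toBasis.ext fun j => by simpa using hbasis j
  have := LinearMap.congr_fun this z
  simpa using this

end NegId

section Main2
variable {Y : Type*} [NormedAddCommGroup Y] [InnerProductSpace ℝ Y] [FiniteDimensional ℝ Y]
    {H : Type*} [NormedAddCommGroup H] [InnerProductSpace ℂ H] [CompleteSpace H]
    (φ : Y →ₗ[ℝ] (H →L[ℂ] H))

-- sanitize a list of vectors into unit vectors with the same product of reflections
lemma sanitize (e : Y) (he : ‖e‖ = 1) (l : List Y) :
    ∃ l' : List Y, (∀ v ∈ l', ‖v‖ = 1) ∧
      (l'.map fun v => reflection ((ℝ ∙ v)ᗮ)).prod = (l.map fun v => reflection ((ℝ ∙ v)ᗮ)).prod := by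
  induction l with
  | nil => exact ⟨[], by simp, rfl⟩
  | cons v l IH =>
    obtain ⟨l', h1, h2⟩ := IH
    by_cases hv : v = 0
    · refine ⟨e :: e :: l', ?_, ?_⟩
      · intro w hw
        rcases List.mem_cons.mp hw with rfl | hw
        · exact he
        rcases List.mem_cons.mp hw with rfl | hw
        · exact he
        · exact h1 _ hw
      · subst hv
        rw [List.map_cons, List.map_cons, List.prod_cons, List.prod_cons, ← mul_assoc,
          reflection_mul_reflection, one_mul, h2, List.map_cons, List.prod_cons]
        have h0 : reflection ((ℝ ∙ (0:Y))ᗮ) = 1 := by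
          ext x
          show (reflection ((ℝ ∙ (0:Y))ᗮ)) x = x
          rw [reflection_eq_self_iff]
          simp [Submodule.span_zero_singleton]
        rw [h0, one_mul]
    · refine ⟨(‖v‖⁻¹ • v) :: l', ?_, ?_⟩
      · intro w hw
        rcases List.mem_cons.mp hw with rfl | hw
        · exact norm_smul_inv_norm (𝕜 := ℝ) hv
        · exact h1 _ hw
      · rw [List.map_cons, List.map_cons, List.prod_cons, List.prod_cons, h2]
        congr 2
        rw [Submodule.span_singleton_smul_eq (by simp [hv] : IsUnit (‖v‖⁻¹:ℝ)) v]

lemma car_exists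
    (hdim : Even (finrank ℝ Y))
    (hsa : ∀ y, IsSelfAdjoint (φ y))
    (hCAR : ∀ y₁ y₂, φ y₁ * φ y₂ + φ y₂ * φ y₁ = (2 * (inner ℝ y₁ y₂ : ℝ)) • (1 : H →L[ℂ] H))
    (r : Y →ₗ[ℝ] Y)
    (hr : ∀ y₁ y₂ : Y, (inner ℝ (r y₁) (r y₂) : ℝ) = inner ℝ y₁ y₂) :
    ∃ U : H →L[ℂ] H, U ∈ unitary (H →L[ℂ] H) ∧
      ∀ y : Y, U * φ y * star U = φ (r y) := by
  by_cases hY : Nontrivial Y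
  case neg =>
    have : Subsingleton Y := not_nontrivial_iff_subsingleton.mp hY
    refine ⟨1, one_mem _, fun y => ?_⟩
    have : r y = y := Subsingleton.elim _ _
    rw [this]
    simp
  case pos =>
    -- r as a linear isometry equivalence
    let ri : Y →ₗᵢ[ℝ] Y := r.isometryOfInner hr
    let re : Y ≃ₗᵢ[ℝ] Y := ri.toLinearIsometryEquiv rfl
    have hre : ∀ y, re y = r y := fun y => rfl
    obtain ⟨l₀, _, hl₀⟩ := re.reflections_generate_dim
    -- unit vector
    obtain ⟨v₀, hv₀⟩ := exists_ne (0 : Y)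
    set e := ‖v₀‖⁻¹ • v₀ with he'
    have he : ‖e‖ = 1 := norm_smul_inv_norm (𝕜 := ℝ) hv₀
    obtain ⟨l₁, hl₁u, hl₁p⟩ := sanitize e he l₀
    -- pad to even length
    set n := finrank ℝ Y with hn
    set B := stdOrthonormalBasis ℝ Y with hB
    set m : List Y := (List.finRange n).map B with hm
    have hmu : ∀ v ∈ m, ‖v‖ = 1 := by
      intro v hv
      rw [hm] at hv
      obtain ⟨i, _, rfl⟩ := List.mem_map.mp hv
      exact B.orthonormal.1 i
    have hmlen : m.length = n := by simp [hm]
    have hmprod : ∀ z : Y, ((m.map fun v => reflection ((ℝ ∙ v)ᗮ)).prod) z = -z := by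
      intro z
      have := refl_basis_neg_one B z rfl
      rw [hm, List.map_map]
      exact this
    set l₂ := if Even l₁.length then l₁ else l₁ ++ m with hl₂
    have hl₂u : ∀ v ∈ l₂, ‖v‖ = 1 := by
      rw [hl₂]
      split
      · exact hl₁u
      · intro v hv
        rcases List.mem_append.mp hv with h | h
        · exact hl₁u v h
        · exact hmu v h
    obtain ⟨hUu, hUc⟩ := car_prod φ hsa hCAR l₂ hl₂u
    refine ⟨(l₂.map fun v => φ v).prod, hUu, fun y => ?_⟩
    rw [hUc y]
    congr 1
    have hl₁r : ∀ z : Y, ((l₁.map fun v => reflection ((ℝ ∙ v)ᗮ)).prod) z = r z := by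
      intro z
      rw [hl₁p, ← hl₀]
      exact hre z
    rw [hl₂]
    by_cases hev : Even l₁.length
    · rw [if_pos hev, hl₁r y, hev.neg_one_pow, one_smul]
    · rw [if_neg hev, List.length_append, hmlen, List.map_append, List.prod_append]
      have : ((l₁.map fun v => reflection ((ℝ ∙ v)ᗮ)).prod *
          (m.map fun v => reflection ((ℝ ∙ v)ᗮ)).prod) y
          = ((l₁.map fun v => reflection ((ℝ ∙ v)ᗮ)).prod) (((m.map fun v => reflection ((ℝ ∙ v)ᗮ)).prod) y) := rfl
      rw [this, hmprod y, map_neg, hl₁r y]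
      have hodd : ¬ Even (l₁.length + n) := by
        rw [Nat.even_add]
        intro h
        exact hev (h.mpr hdim)
      rw [(Nat.not_even_iff_odd.mp hodd).neg_one_pow]
      simp
/-- The Hilbert space of an irreducible CAR representation over a f.d. space is f.d. -/
lemma car_fd
    (hCAR : ∀ y₁ y₂, φ y₁ * φ y₂ + φ y₂ * φ y₁ = (2 * (inner ℝ y₁ y₂ : ℝ)) • (1 : H →L[ℂ] H))
    (hirr : ∀ S : Submodule ℂ H, IsClosed (S : Set H) →
      (∀ y, ∀ x ∈ S, φ y x ∈ S) → S = ⊥ ∨ S = ⊤) :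
    FiniteDimensional ℂ H := by
  by_cases hH : Subsingleton H
  · exact Module.Finite.of_finite
  have : Nontrivial H := not_subsingleton_iff_nontrivial.mp hH
  obtain ⟨x, hx⟩ := exists_ne (0 : H)
  set n := finrank ℝ Y with hn
  set B := stdOrthonormalBasis ℝ Y with hB
  set v : ℕ → Y := fun k => if h : k < n then B ⟨k, h⟩ else 0 with hv
  have hortho : ∀ j k : ℕ, j ≠ k → (inner ℝ (v j) (v k) : ℝ) = 0 := by
    intro j k hjk
    rw [hv]
    dsimp only
    split
    · split
      · rw [orthonormal_iff_ite.mp B.orthonormal]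
        simp [Fin.mk.injEq, hjk]
      · simp
    · simp
  -- iterated invariant subspaces
  let M : ℕ → Submodule ℂ H := fun k => Nat.rec (motive := fun _ => Submodule ℂ H) (span ℂ {x})
    (fun k Mk => Mk ⊔ Mk.map (φ (v k) : H →ₗ[ℂ] H)) k
  have hMsucc : ∀ k, M (k+1) = M k ⊔ (M k).map (φ (v k) : H →ₗ[ℂ] H) := fun k => rfl
  have hMfd : ∀ k, FiniteDimensional ℂ ↥(M k) := by
    intro k
    induction k with
    | zero => exact FiniteDimensional.span_of_finite ℂ (Set.finite_singleton x)
    | succ k IH =>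
      rw [hMsucc]
      have : FiniteDimensional ℂ ((M k).map (φ (v k) : H →ₗ[ℂ] H)) :=
        Module.Finite.map _ _
      exact Submodule.finiteDimensional_sup _ _
  have hMinv : ∀ k, ∀ j : ℕ, j < k → ∀ b ∈ M k, φ (v j) b ∈ M k := by
    intro k
    induction k with
    | zero => omega
    | succ k IH =>
      intro j hj b hb
      rw [hMsucc] at hb ⊢
      obtain ⟨a, ha, c', ⟨c, hc, rfl⟩, rfl⟩ := Submodule.mem_sup.mp hb
      simp only [ContinuousLinearMap.coe_coe] at hb ⊢
      have hsplit : φ (v j) (a + φ (v k) c) = φ (v j) a + φ (v j) (φ (v k) c) := by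
        rw [map_add]
      rw [hsplit]
      rcases Nat.lt_succ_iff_lt_or_eq.mp hj with hjk | hjk
      · -- j < k
        have h1 : φ (v j) a ∈ M k := IH j hjk a ha
        have h2 : φ (v j) (φ (v k) c) = -(φ (v k) (φ (v j) c)) := by
          have hanti : φ (v j) * φ (v k) = -(φ (v k) * φ (v j)) := by
            have := hCAR (v j) (v k)
            rw [hortho j k (Nat.ne_of_lt hjk)] at this
            simp only [mul_zero, zero_smul] at this
            exact eq_neg_of_add_eq_zero_left this
          calc φ (v j) (φ (v k) c) = (φ (v j) * φ (v k)) c := rfl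
            _ = (-(φ (v k) * φ (v j))) c := by rw [hanti]
            _ = -(φ (v k) (φ (v j) c)) := rfl
        rw [h2]
        refine Submodule.add_mem _ (Submodule.mem_sup_left h1) ?_
        refine Submodule.neg_mem _ (Submodule.mem_sup_right ?_)
        exact Submodule.mem_map_of_mem (IH j hjk c hc)
      · -- j = k
        subst hjk
        have h1 : φ (v j) a ∈ (M j).map (φ (v j) : H →ₗ[ℂ] H) :=
          Submodule.mem_map_of_mem ha
        have h2 : φ (v j) (φ (v j) c) = ((inner ℝ (v j) (v j) : ℝ) : ℂ) • c := by
          calc φ (v j) (φ (v j) c) = (φ (v j) * φ (v j)) c := rfl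
            _ = (((inner ℝ (v j) (v j) : ℝ)) • (1 : H →L[ℂ] H)) c := by rw [car_sq φ hCAR]
            _ = ((inner ℝ (v j) (v j) : ℝ) : ℂ) • c := by
                rw [ContinuousLinearMap.smul_apply, ContinuousLinearMap.one_apply]
                rw [← algebraMap_smul ℂ ((inner ℝ (v j) (v j) : ℝ)) c]
                rfl
        rw [h2]
        exact Submodule.add_mem _ (Submodule.mem_sup_right h1)
          (Submodule.mem_sup_left (Submodule.smul_mem _ _ hc))
  -- M n is invariant under all φ y
  have hinv : ∀ y : Y, ∀ b ∈ M n, φ y b ∈ M n := by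
    intro y b hb
    have hy : (∑ i : Fin n, B.repr y i • B i) = y := B.sum_repr y
    have : φ y b = ∑ i : Fin n, B.repr y i • (φ (B i) b) := by
      conv_lhs => rw [← hy]
      rw [map_sum, ContinuousLinearMap.sum_apply]
      refine Finset.sum_congr rfl fun i _ => ?_
      rw [map_smul, ContinuousLinearMap.smul_apply]
    rw [this]
    refine Submodule.sum_mem _ fun i _ => ?_
    have hBi : B i = v (i : ℕ) := by
      rw [hv]; dsimp only; rw [dif_pos i.isLt]
    rw [← algebraMap_smul ℂ (B.repr y i)]
    refine Submodule.smul_mem _ _ ?_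
    rw [hBi]
    exact hMinv n i i.isLt b hb
  have hclosed : IsClosed ((M n : Submodule ℂ H) : Set H) := by
    have := hMfd n
    exact Submodule.closed_of_finiteDimensional _
  rcases hirr (M n) hclosed hinv with hbot | htop
  · exfalso
    have hxM : x ∈ M n := by
      have h0 : x ∈ M 0 := Submodule.mem_span_singleton_self x
      have hmono : Monotone M := monotone_nat_of_le_succ fun k => by
        rw [hMsucc]; exact le_sup_left
      exact hmono (Nat.zero_le n) h0
    rw [hbot] at hxM
    exact hx (Submodule.mem_bot ℂ |>.mp hxM)
  · have := hMfd n
    rw [htop] at this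
    exact Module.Finite.equiv (Submodule.topEquiv)
lemma car_schur [FiniteDimensional ℂ H]
    (hirr : ∀ S : Submodule ℂ H, IsClosed (S : Set H) →
      (∀ y, ∀ x ∈ S, φ y x ∈ S) → S = ⊥ ∨ S = ⊤)
    (W : H →L[ℂ] H) (hWu : W ∈ unitary (H →L[ℂ] H))
    (hcomm : ∀ y, W * φ y = φ y * W) :
    ∃ lam : ℂ, ‖lam‖ = 1 ∧ W = lam • (1 : H →L[ℂ] H) := by
  by_cases hH : Subsingleton H
  · exact ⟨1, by simp, Subsingleton.elim _ _⟩
  have : Nontrivial H := not_subsingleton_iff_nontrivial.mp hH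
  set f : Module.End ℂ H := (W : H →ₗ[ℂ] H) with hf
  obtain ⟨μ, hμ⟩ := Module.End.exists_eigenvalue f
  set E := f.eigenspace μ with hE
  have hclosed : IsClosed ((E : Submodule ℂ H) : Set H) :=
    Submodule.closed_of_finiteDimensional _
  have hinv : ∀ y, ∀ x ∈ E, φ y x ∈ E := by
    intro y x hx
    rw [hE, Module.End.mem_eigenspace_iff] at hx ⊢
    have : W (φ y x) = φ y (W x) := by
      calc W (φ y x) = (W * φ y) x := rfl
        _ = (φ y * W) x := by rw [hcomm]
        _ = φ y (W x) := rfl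
    calc f (φ y x) = W (φ y x) := rfl
      _ = φ y (W x) := this
      _ = φ y (μ • x) := by rw [← hx]; rfl
      _ = μ • φ y x := by rw [map_smul]
  rcases hirr E hclosed hinv with hbot | htop
  · exact absurd hbot hμ
  · have hWeq : W = μ • (1 : H →L[ℂ] H) := by
      ext z
      have hz : z ∈ E := htop ▸ Submodule.mem_top
      rw [hE, Module.End.mem_eigenspace_iff] at hz
      simpa [hf] using hz
    have hnorm : ‖μ‖ = 1 := by
      have h1 : star W * W = 1 := (Unitary.mem_iff.mp hWu).1
      rw [hWeq] at h1
      rw [star_smul, star_one] at h1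
      rw [smul_mul_smul_comm, one_mul] at h1
      have heq : (starRingEnd ℂ μ * μ) • (1 : H →L[ℂ] H) = (1:ℂ) • (1 : H →L[ℂ] H) := by
        rw [one_smul]; exact h1
      have hone : (1 : H →L[ℂ] H) ≠ 0 := by
        intro h
        obtain ⟨z, hz⟩ := exists_ne (0 : H)
        apply hz
        have := ContinuousLinearMap.ext_iff.mp h z
        simpa using this
      have hsc : starRingEnd ℂ μ * μ = 1 := smul_left_injective ℂ hone heq
      have h2 : ((Complex.normSq μ : ℝ) : ℂ) = 1 := by
        rw [← Complex.mul_conj]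
        rw [mul_comm] at hsc
        exact hsc
      have h3 : Complex.normSq μ = 1 := by exact_mod_cast h2
      have h4 : ‖μ‖ ^ 2 = 1 := by
        rw [← Complex.normSq_eq_norm_sq, h3]
      rw [← Real.sqrt_one, ← h4, Real.sqrt_sq (norm_nonneg μ)]
    exact ⟨μ, hnorm, hWeq⟩
end Main2

/-- Fermionic Bogolubov transformations.
For an irreducible representation `φ` of the CAR over an even-dimensional real Hilbert
space `(Y, α)` and an orthogonal transformation `r` of `Y`, there is a unitary `U` with
`U φ(y) U* = φ(r y)` for all `y`, and `U` is unique up to a phase factor. -/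
theorem fermionic_bogolubov_implementation
    {Y : Type*} [NormedAddCommGroup Y] [InnerProductSpace ℝ Y]
    [FiniteDimensional ℝ Y] (hdim : Even (Module.finrank ℝ Y))
    {H : Type*} [NormedAddCommGroup H] [InnerProductSpace ℂ H] [CompleteSpace H]
    (φ : Y →ₗ[ℝ] (H →L[ℂ] H))
    (hsa : ∀ y, IsSelfAdjoint (φ y))
    (hCAR : ∀ y₁ y₂, φ y₁ * φ y₂ + φ y₂ * φ y₁ =
      (2 * (inner ℝ y₁ y₂ : ℝ)) • (1 : H →L[ℂ] H))
    (hirr : ∀ S : Submodule ℂ H, IsClosed (S : Set H) →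
      (∀ y, ∀ x ∈ S, φ y x ∈ S) → S = ⊥ ∨ S = ⊤)
    (r : Y →ₗ[ℝ] Y)
    (hr : ∀ y₁ y₂ : Y, (inner ℝ (r y₁) (r y₂) : ℝ) = inner ℝ y₁ y₂) :
    (∃ U : H →L[ℂ] H, U ∈ unitary (H →L[ℂ] H) ∧
      ∀ y : Y, U * φ y * star U = φ (r y)) ∧
    (∀ U U' : H →L[ℂ] H, U ∈ unitary (H →L[ℂ] H) → U' ∈ unitary (H →L[ℂ] H) →
      (∀ y : Y, U * φ y * star U = φ (r y)) →
      (∀ y : Y, U' * φ y * star U' = φ (r y)) →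
      ∃ lam : ℂ, ‖lam‖ = 1 ∧ U' = lam • U) := by
  constructor
  · exact car_exists φ hdim hsa hCAR r hr
  · intro U U' hUu hU'u hU hU'
    haveI : FiniteDimensional ℂ H := car_fd φ hCAR hirr
    set W : H →L[ℂ] H := star U' * U with hW
    have hWu : W ∈ unitary (H →L[ℂ] H) := mul_mem (Unitary.star_mem hU'u) hUu
    have hUstar : star U * U = 1 := (Unitary.mem_iff.mp hUu).1
    have hU'star : star U' * U' = 1 := (Unitary.mem_iff.mp hU'u).1
    have hU'star2 : U' * star U' = 1 := (Unitary.mem_iff.mp hU'u).2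
    have hcomm : ∀ y, W * φ y = φ y * W := by
      intro y
      have h1 : U * φ y = φ (r y) * U := by
        have := congrArg (· * U) (hU y)
        simp only [mul_assoc, hUstar, mul_one] at this
        simpa [mul_assoc] using this
      have h2 : star U' * φ (r y) = φ y * star U' := by
        have h2a : U' * φ y = φ (r y) * U' := by
          have := congrArg (· * U') (hU' y)
          simp only [mul_assoc, hU'star, mul_one] at this
          simpa [mul_assoc] using this
        have := congrArg (fun z => star U' * z * star U') h2a
        simp only [← mul_assoc, hU'star] at this
        simp only [mul_assoc, hU'star2] at this
        simpa [mul_assoc] using this.symm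
      calc W * φ y = star U' * (U * φ y) := by rw [hW, mul_assoc]
        _ = star U' * (φ (r y) * U) := by rw [h1]
        _ = (star U' * φ (r y)) * U := by rw [mul_assoc]
        _ = (φ y * star U') * U := by rw [h2]
        _ = φ y * W := by rw [hW, mul_assoc]
    obtain ⟨μ, hμn, hμ⟩ := car_schur φ hirr W hWu hcomm
    have hUeq : U = μ • U' := by
      have h := congrArg (U' * ·) hμ
      rw [hW, ← mul_assoc, hU'star2, one_mul] at h
      simpa [mul_smul_comm, mul_one] using h
    refine ⟨starRingEnd ℂ μ, ?_, ?_⟩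
    · rw [RCLike.norm_conj]; exact hμn
    · have hμ1 : starRingEnd ℂ μ * μ = 1 := by
        rw [mul_comm, Complex.mul_conj]
        norm_cast
        rw [Complex.normSq_eq_norm_sq, hμn]
        norm_num
      rw [hUeq, smul_smul, hμ1, one_smul]
end

section
/- (A quasi-free representation of the CCR is regular) Let W be a representation of the CCR over (Y, ω) on a complex Hilbert space H. Suppose Ψ ∈ H is a unit vector which is cyclic (the linear span of {W(y)Ψ : y ∈ Y} is dense in H) and quasi-free: there is a symmetric positive bilinear form η on Y such that ⟨Ψ, W(y)Ψ⟩ = exp(−(1/4) η(y,y)) for all y ∈ Y. Then W is regular: for every y ∈ Y the map ℝ ∋ t ↦ W(ty) is strongly continuous. -/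
/-- A quasi-free representation of the CCR is regular.
If a representation `W` of the CCR over `(Y, ω)` has a cyclic unit vector `Ψ` with
`⟨Ψ, W(y)Ψ⟩ = exp(−η(y,y)/4)` for a symmetric positive bilinear form `η`, then
`t ↦ W(t y)` is strongly continuous for every `y`. -/
theorem quasifree_representation_is_regular
    {Y : Type*} [AddCommGroup Y] [Module ℝ Y]
    {H : Type*} [NormedAddCommGroup H] [InnerProductSpace ℂ H] [CompleteSpace H]
    (ω : Y →ₗ[ℝ] Y →ₗ[ℝ] ℝ)
    (hanti : ∀ y₁ y₂ : Y, ω y₁ y₂ = - ω y₂ y₁)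
    (W : Y → (H →L[ℂ] H))
    (hunit : ∀ y, W y ∈ unitary (H →L[ℂ] H))
    (hWeyl : ∀ y₁ y₂ : Y, W y₁ * W y₂ =
      Complex.exp (-(Complex.I / 2) * (ω y₁ y₂ : ℂ)) • W (y₁ + y₂))
    (η : Y →ₗ[ℝ] Y →ₗ[ℝ] ℝ)
    (hsymm : ∀ y₁ y₂ : Y, η y₁ y₂ = η y₂ y₁)
    (hpos : ∀ y : Y, 0 ≤ η y y)
    (Ψ : H) (hΨ : ‖Ψ‖ = 1)
    (hcyc : Dense ((Submodule.span ℂ (Set.range fun y : Y => W y Ψ) : Submodule ℂ H)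
      : Set H))
    (hqf : ∀ y : Y, (inner ℂ Ψ (W y Ψ) : ℂ) = Complex.exp (-(η y y : ℂ) / 4)) :
    ∀ (y : Y) (x : H), Continuous fun t : ℝ => W (t • y) x := by
  -- basic identities
  have hω0 : ∀ z : Y, ω z z = 0 := fun z => by have := hanti z z; linarith
  have hW0 : W 0 = 1 := by
    have h := hWeyl 0 0
    simp only [map_zero, LinearMap.zero_apply, Complex.ofReal_zero, mul_zero,
      Complex.exp_zero, one_smul, add_zero] at h
    have hu := (Unitary.mem_iff.mp (hunit 0)).1
    calc W 0 = (star (W 0) * W 0) * W 0 := by rw [hu, one_mul]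
      _ = star (W 0) * (W 0 * W 0) := by rw [mul_assoc]
      _ = star (W 0) * W 0 := by rw [h]
      _ = 1 := hu
  have hWinv : ∀ z : Y, W z * W (-z) = 1 := by
    intro z
    have h := hWeyl z (-z)
    rw [map_neg, hω0, add_neg_cancel, hW0] at h
    simpa using h
  have hstar : ∀ z : Y, star (W z) = W (-z) := by
    intro z
    have hu := (Unitary.mem_iff.mp (hunit z)).1
    calc star (W z) = star (W z) * (W z * W (-z)) := by rw [hWinv, mul_one]
      _ = (star (W z) * W z) * W (-z) := by rw [mul_assoc]
      _ = W (-z) := by rw [hu, one_mul]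
  have hΨne : Ψ ≠ 0 := by
    intro h; rw [h, norm_zero] at hΨ; norm_num at hΨ
  have : Nontrivial H := ⟨⟨Ψ, 0, hΨne⟩⟩
  have hnorm1 : ∀ z : Y, ‖W z‖ = 1 := fun z => CStarRing.norm_of_mem_unitary (hunit z)
  have happ : ∀ (z z' : Y) (v : H), W z (W z' v) = (W z * W z') v := fun _ _ _ => rfl
  have hnorm : ∀ (z : Y) (v : H), ‖W z v‖ = ‖v‖ := by
    intro z v
    refine le_antisymm ?_ ?_
    · calc ‖W z v‖ ≤ ‖W z‖ * ‖v‖ := (W z).le_opNorm v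
        _ = ‖v‖ := by rw [hnorm1, one_mul]
    · have h1 : W (-z) * W z = 1 := by simpa using hWinv (-z)
      have h2 : W (-z) (W z v) = v := by rw [happ, h1]; rfl
      calc ‖v‖ = ‖W (-z) (W z v)‖ := by rw [h2]
        _ ≤ ‖W (-z)‖ * ‖W z v‖ := (W (-z)).le_opNorm _
        _ = ‖W z v‖ := by rw [hnorm1, one_mul]
  -- adjoint moves W across the inner product
  have hadj : ∀ (z : Y) (u v : H), (inner ℂ (W z u) v : ℂ) = inner ℂ u (W (-z) v) := by
    intro z u v
    rw [← hstar, ContinuousLinearMap.star_eq_adjoint,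
      ContinuousLinearMap.adjoint_inner_right]
  intro y
  -- the key inner-product formula on coherent vectors
  have hkey : ∀ (z : Y) (r : ℝ), (inner ℂ (W z Ψ) (W (r • y) (W z Ψ)) : ℂ) =
      Complex.exp (Complex.I * (r * ω z y : ℝ)) *
        Complex.exp (-((r ^ 2 * η y y : ℝ) : ℂ) / 4) := by
    intro z r
    have h1 : W (r • y) (W z Ψ) =
        Complex.exp (-(Complex.I / 2) * ((r * ω y z : ℝ) : ℂ)) • W (r • y + z) Ψ := by
      rw [happ, hWeyl, map_smul]
      simp only [LinearMap.smul_apply, smul_eq_mul, Complex.ofReal_mul,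
        ContinuousLinearMap.smul_apply]
    have h2 : (inner ℂ (W z Ψ) (W (r • y + z) Ψ) : ℂ) =
        Complex.exp ((Complex.I / 2) * ((r * ω z y : ℝ) : ℂ)) *
          Complex.exp (-((r ^ 2 * η y y : ℝ) : ℂ) / 4) := by
      have h3 : W (-z) (W (r • y + z) Ψ) =
          Complex.exp (-(Complex.I / 2) * ((ω (-z) (r • y + z) : ℝ) : ℂ)) • W (r • y) Ψ := by
        have harg : -z + (r • y + z) = r • y := by abel
        rw [happ, hWeyl, harg]
        exact ContinuousLinearMap.smul_apply _ _ _
      have h4 : ω (-z) (r • y + z) = -(r * ω z y) := by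
        rw [map_neg]
        simp only [LinearMap.neg_apply, map_add, map_smul, smul_eq_mul, hω0]
        ring
      have h5 : η (r • y) (r • y) = r ^ 2 * η y y := by
        rw [map_smul]
        simp only [LinearMap.smul_apply, map_smul, smul_eq_mul]
        ring
      rw [hadj z Ψ, h3, h4, inner_smul_right, hqf, h5]
      push_cast
      ring_nf
    rw [h1, inner_smul_right, h2, ← mul_assoc, ← Complex.exp_add]
    have h6 : (ω y z : ℝ) = -(ω z y) := hanti y z
    rw [h6]
    push_cast
    ring_nf
  -- continuity on coherent vectors
  have hcont : ∀ z : Y, Continuous fun t : ℝ => W (t • y) (W z Ψ) := by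
    intro z
    rw [continuous_iff_continuousAt]
    intro t
    rw [ContinuousAt, tendsto_iff_norm_sub_tendsto_zero]
    set w := W z Ψ with hw
    have hwnorm : ‖w‖ = 1 := by rw [hw, hnorm, hΨ]
    -- the inner product of two Weyl translates of w
    have hip : ∀ s : ℝ, (inner ℂ (W (s • y) w) (W (t • y) w) : ℂ) =
        Complex.exp (Complex.I * ((t - s) * ω z y : ℝ)) *
          Complex.exp (-(((t - s) ^ 2 * η y y : ℝ) : ℂ) / 4) := by
      intro s
      have h1 : (inner ℂ (W (s • y) w) (W (t • y) w) : ℂ) =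
          inner ℂ w (W (-(s • y)) (W (t • y) w)) := hadj _ _ _
      have h2 : W (-(s • y)) (W (t • y) w) = W ((t - s) • y) w := by
        rw [happ, hWeyl]
        have h0 : ω (-(s • y)) (t • y) = 0 := by
          rw [map_neg, map_smul]
          simp only [LinearMap.neg_apply, LinearMap.smul_apply, map_smul, smul_eq_mul,
            hω0, mul_zero, neg_zero]
        rw [h0]
        have h1 : -(s • y) + t • y = (t - s) • y := by
          rw [sub_smul]; abel
        rw [h1]
        simp only [Complex.ofReal_zero, mul_zero, Complex.exp_zero, one_smul]
      rw [h1, h2, hw, hkey]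
    -- the norm of the difference
    have hnd : ∀ s : ℝ, ‖W (s • y) w - W (t • y) w‖ =
        Real.sqrt (2 - 2 * (Complex.exp (Complex.I * ((t - s) * ω z y : ℝ)) *
          Complex.exp (-(((t - s) ^ 2 * η y y : ℝ) : ℂ) / 4)).re) := by
      intro s
      have hsq : ‖W (s • y) w - W (t • y) w‖ ^ 2 =
          2 - 2 * (Complex.exp (Complex.I * ((t - s) * ω z y : ℝ)) *
            Complex.exp (-(((t - s) ^ 2 * η y y : ℝ) : ℂ) / 4)).re := by
        have n1 : ‖W (s • y) w‖ = 1 := by rw [hnorm, hw, hnorm, hΨ]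
        have n2 : ‖W (t • y) w‖ = 1 := by rw [hnorm, hw, hnorm, hΨ]
        rw [@norm_sub_sq ℂ, n1, n2, hip]
        simp only [RCLike.re_to_complex]
        ring
      rw [← hsq, Real.sqrt_sq (norm_nonneg _)]
    have hgcont : Continuous fun s : ℝ =>
        Real.sqrt (2 - 2 * (Complex.exp (Complex.I * ((t - s) * ω z y : ℝ)) *
          Complex.exp (-(((t - s) ^ 2 * η y y : ℝ) : ℂ) / 4)).re) := by
      apply Real.continuous_sqrt.comp
      apply Continuous.sub continuous_const
      apply Continuous.mul continuous_const
      apply Complex.continuous_re.comp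
      apply Continuous.mul
      · exact Complex.continuous_exp.comp (by fun_prop)
      · exact Complex.continuous_exp.comp (by fun_prop)
    have hval : Real.sqrt (2 - 2 * (Complex.exp (Complex.I * ((t - t) * ω z y : ℝ)) *
        Complex.exp (-(((t - t) ^ 2 * η y y : ℝ) : ℂ) / 4)).re) = 0 := by
      norm_num
    have := hgcont.tendsto t
    rw [hval] at this
    refine Filter.Tendsto.congr (fun s => ?_) this
    exact (hnd s).symm
  -- the set of vectors with continuous orbit is a closed submodule
  let C : Submodule ℂ H :=
    { carrier := {x : H | Continuous fun t : ℝ => W (t • y) x}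
      add_mem' := fun {a b} ha hb => by
        simp only [Set.mem_setOf_eq, map_add]; exact Continuous.add ha hb
      zero_mem' := by
        simpa only [Set.mem_setOf_eq, map_zero] using
          (continuous_const : Continuous fun _ : ℝ => (0 : H))
      smul_mem' := fun c a ha => by
        simp only [Set.mem_setOf_eq, map_smul]; exact Continuous.const_smul ha c }
  have hCclosed : IsClosed (C : Set H) := by
    refine isClosed_of_closure_subset ?_
    intro x hx
    obtain ⟨u, hu, hulim⟩ := mem_closure_iff_seq_limit.mp hx
    have hTU : TendstoUniformly (fun n (t : ℝ) => W (t • y) (u n))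
        (fun t : ℝ => W (t • y) x) Filter.atTop := by
      rw [Metric.tendstoUniformly_iff]
      intro ε hε
      have := (Metric.tendsto_atTop.mp hulim) ε hε
      obtain ⟨N, hN⟩ := this
      refine Filter.eventually_atTop.mpr ⟨N, fun n hn t => ?_⟩
      have : dist (W (t • y) x) (W (t • y) (u n)) = dist (u n) x := by
        rw [dist_eq_norm, ← map_sub, hnorm, ← dist_eq_norm, dist_comm]
      rw [this]
      exact hN n hn
    exact hTU.continuous (Filter.Eventually.of_forall hu).frequently
  have hspan : (Submodule.span ℂ (Set.range fun z : Y => W z Ψ)) ≤ C := by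
    rw [Submodule.span_le]
    rintro _ ⟨z, rfl⟩
    exact hcont z
  intro x
  have hx : x ∈ closure ((Submodule.span ℂ (Set.range fun z : Y => W z Ψ) : Submodule ℂ H)
      : Set H) := hcyc x
  have hx2 : x ∈ closure (C : Set H) := closure_mono hspan hx
  rw [hCclosed.closure_eq] at hx2
  exact hx2
end

section
/- Let φ be a representation of the CAR over a real Hilbert space (Y, α) on a complex Hilbert space H, let Ψ ∈ H be a unit vector, and define ω(y₁,y₂) := (1/i)⟨Ψ, (φ(y₁)φ(y₂) − φ(y₂)φ(y₁))Ψ⟩ for y₁, y₂ ∈ Y. Then: (i) ω is a real-valued antisymmetric bilinear form on Y; (ii) ⟨Ψ, φ(y₁)φ(y₂)Ψ⟩ = α(y₁,y₂) + (i/2) ω(y₁,y₂) for all y₁, y₂ ∈ Y; (iii) |ω(y₁,y₂)| ≤ 2 α(y₁,y₁)^{1/2} α(y₂,y₂)^{1/2} for all y₁, y₂ ∈ Y. -/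
/-- Two-point functions of a CAR representation.
For a representation `φ` of the CAR over a real Hilbert space `(Y, α)` and a unit vector
`Ψ`, the form `ω(y₁,y₂) := (1/i)⟨Ψ, [φ(y₁),φ(y₂)]Ψ⟩` is a real-valued antisymmetric
bilinear form, the two-point function is `⟨Ψ, φ(y₁)φ(y₂)Ψ⟩ = α(y₁,y₂) + (i/2)ω(y₁,y₂)`,
and `|ω(y₁,y₂)| ≤ 2 α(y₁,y₁)^{1/2} α(y₂,y₂)^{1/2}`. -/
theorem car_two_point_function
    {Y : Type*} [NormedAddCommGroup Y] [InnerProductSpace ℝ Y]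
    {H : Type*} [NormedAddCommGroup H] [InnerProductSpace ℂ H] [CompleteSpace H]
    (φ : Y →ₗ[ℝ] (H →L[ℂ] H))
    (hsa : ∀ y, IsSelfAdjoint (φ y))
    (hCAR : ∀ y₁ y₂, φ y₁ * φ y₂ + φ y₂ * φ y₁ =
      (2 * (inner ℝ y₁ y₂ : ℝ)) • (1 : H →L[ℂ] H))
    (Ψ : H) (hΨ : ‖Ψ‖ = 1)
    (Ω : Y → Y → ℂ)
    (hΩ : ∀ y₁ y₂ : Y, Ω y₁ y₂ =
      (inner ℂ Ψ ((φ y₁ * φ y₂ - φ y₂ * φ y₁) Ψ) : ℂ) / Complex.I) :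
    -- (i) ω is a real-valued antisymmetric bilinear form
    (∀ y₁ y₂ : Y, (Ω y₁ y₂).im = 0) ∧
    (∀ y₁ y₂ : Y, Ω y₁ y₂ = - Ω y₂ y₁) ∧
    (∀ y₁ y₂ y₃ : Y, Ω (y₁ + y₂) y₃ = Ω y₁ y₃ + Ω y₂ y₃) ∧
    (∀ (c : ℝ) (y₁ y₂ : Y), Ω (c • y₁) y₂ = (c : ℂ) * Ω y₁ y₂) ∧
    (∀ y₁ y₂ y₃ : Y, Ω y₁ (y₂ + y₃) = Ω y₁ y₂ + Ω y₁ y₃) ∧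
    (∀ (c : ℝ) (y₁ y₂ : Y), Ω y₁ (c • y₂) = (c : ℂ) * Ω y₁ y₂) ∧
    -- (ii) the two-point function
    (∀ y₁ y₂ : Y, (inner ℂ Ψ (φ y₁ (φ y₂ Ψ)) : ℂ) =
      ((inner ℝ y₁ y₂ : ℝ) : ℂ) + (Complex.I / 2) * Ω y₁ y₂) ∧
    -- (iii) the bound
    (∀ y₁ y₂ : Y, ‖Ω y₁ y₂‖ ≤
      2 * Real.sqrt (inner ℝ y₁ y₁ : ℝ) * Real.sqrt (inner ℝ y₂ y₂ : ℝ)) := by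
  -- symmetry of φ
  have hsym : ∀ (y : Y) (x z : H), (inner ℂ ((φ y) x) z : ℂ) = inner ℂ x ((φ y) z) :=
    fun y => ContinuousLinearMap.isSelfAdjoint_iff_isSymmetric.mp (hsa y)
  have hΨΨ : (inner ℂ Ψ Ψ : ℂ) = 1 := by
    rw [inner_self_eq_norm_sq_to_K, hΨ]; norm_num
  have hsm : ∀ (r : ℝ) (x y : H), (inner ℂ x (r • y) : ℂ) = (r : ℂ) * inner ℂ x y := by
    intro r x y
    rw [RCLike.real_smul_eq_coe_smul (K := ℂ), inner_smul_right]
    norm_cast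
  have hφsm : ∀ (y : Y) (r : ℝ) (x : H), (φ y) (r • x) = r • (φ y) x := by
    intro y r x
    exact (φ y).map_smul_of_tower r x
  -- conjugation swaps the two-point function
  have hconj : ∀ y₁ y₂ : Y, (starRingEnd ℂ) (inner ℂ Ψ ((φ y₁) ((φ y₂) Ψ)) : ℂ)
      = inner ℂ Ψ ((φ y₂) ((φ y₁) Ψ)) := by
    intro y₁ y₂
    rw [inner_conj_symm, hsym, hsym]
  -- CAR applied to Ψ
  have hcar' : ∀ y₁ y₂ : Y, (inner ℂ Ψ ((φ y₁) ((φ y₂) Ψ)) : ℂ)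
      + inner ℂ Ψ ((φ y₂) ((φ y₁) Ψ)) = ((2 * (inner ℝ y₁ y₂ : ℝ) : ℝ) : ℂ) := by
    intro y₁ y₂
    have h := congrArg (fun T : H →L[ℂ] H => (inner ℂ Ψ (T Ψ) : ℂ)) (hCAR y₁ y₂)
    simpa [ContinuousLinearMap.add_apply, ContinuousLinearMap.mul_apply,
      ContinuousLinearMap.smul_apply, ContinuousLinearMap.one_apply,
      inner_add_right, hsm, hΨΨ, hΨ] using h
  -- real part of the two-point function
  have hre : ∀ y₁ y₂ : Y, (inner ℂ Ψ ((φ y₁) ((φ y₂) Ψ)) : ℂ).re = (inner ℝ y₁ y₂ : ℝ) := by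
    intro y₁ y₂
    have h := hcar' y₁ y₂
    have h2 : (inner ℂ Ψ ((φ y₂) ((φ y₁) Ψ)) : ℂ) =
        (starRingEnd ℂ) (inner ℂ Ψ ((φ y₁) ((φ y₂) Ψ)) : ℂ) := (hconj y₁ y₂).symm
    rw [h2] at h
    have := congrArg Complex.re h
    simp only [Complex.add_re, Complex.conj_re, Complex.ofReal_re] at this
    linarith
  -- Ω equals twice the imaginary part
  have hΩim : ∀ y₁ y₂ : Y, Ω y₁ y₂ = ((2 * (inner ℂ Ψ ((φ y₁) ((φ y₂) Ψ)) : ℂ).im : ℝ) : ℂ) := by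
    intro y₁ y₂
    rw [hΩ]
    have h2 : (inner ℂ Ψ ((φ y₂) ((φ y₁) Ψ)) : ℂ) =
        (starRingEnd ℂ) (inner ℂ Ψ ((φ y₁) ((φ y₂) Ψ)) : ℂ) := (hconj y₁ y₂).symm
    rw [ContinuousLinearMap.sub_apply, inner_sub_right,
      ContinuousLinearMap.mul_apply, ContinuousLinearMap.mul_apply, h2,
      Complex.sub_conj, div_eq_iff Complex.I_ne_zero]
  -- Ω is the inner product of the commutator divided by I, in raw form
  have hΩraw : ∀ y₁ y₂ : Y, Ω y₁ y₂ =
      ((inner ℂ Ψ ((φ y₁) ((φ y₂) Ψ)) : ℂ) - inner ℂ Ψ ((φ y₂) ((φ y₁) Ψ))) / Complex.I := by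
    intro y₁ y₂
    rw [hΩ]
    simp [ContinuousLinearMap.sub_apply, ContinuousLinearMap.mul_apply, inner_sub_right]
  refine ⟨?_, ?_, ?_, ?_, ?_, ?_, ?_, ?_⟩
  · intro y₁ y₂; rw [hΩim]; simp
  · intro y₁ y₂; rw [hΩraw, hΩraw]; ring
  · intro y₁ y₂ y₃
    rw [hΩraw, hΩraw, hΩraw]
    simp only [map_add, ContinuousLinearMap.add_apply, inner_add_right]
    ring
  · intro c y₁ y₂
    rw [hΩraw, hΩraw]
    simp only [map_smul, ContinuousLinearMap.smul_apply, hφsm, hsm]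
    ring
  · intro y₁ y₂ y₃
    rw [hΩraw, hΩraw, hΩraw]
    simp only [map_add, ContinuousLinearMap.add_apply, inner_add_right]
    ring
  · intro c y₁ y₂
    rw [hΩraw, hΩraw]
    simp only [map_smul, ContinuousLinearMap.smul_apply, hφsm, hsm]
    ring
  · intro y₁ y₂
    rw [hΩim]
    have := hre y₁ y₂
    apply Complex.ext <;> simp [this]
  · intro y₁ y₂
    -- norms of φ y Ψ
    have hnorm : ∀ y : Y, ‖(φ y) Ψ‖ = Real.sqrt (inner ℝ y y : ℝ) := by
      intro y
      have h : (‖(φ y) Ψ‖ : ℝ) ^ 2 = (inner ℝ y y : ℝ) := by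
        have h1 : (inner ℂ ((φ y) Ψ) ((φ y) Ψ) : ℂ) = inner ℂ Ψ ((φ y) ((φ y) Ψ)) := hsym y Ψ _
        have h2 := hcar' y y
        rw [← h1] at h2
        have h3 : (2 : ℂ) * inner ℂ ((φ y) Ψ) ((φ y) Ψ) = ((2 * (inner ℝ y y : ℝ) : ℝ) : ℂ) := by
          rw [two_mul]; exact h2
        have h4 : (inner ℂ ((φ y) Ψ) ((φ y) Ψ) : ℂ) = ((‖(φ y) Ψ‖ : ℝ) : ℂ) ^ 2 :=
          inner_self_eq_norm_sq_to_K _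
        rw [h4] at h3
        have h5 : ((2 * ‖(φ y) Ψ‖ ^ 2 : ℝ) : ℂ) = ((2 * (inner ℝ y y : ℝ) : ℝ) : ℂ) := by
          push_cast at h3 ⊢
          linear_combination h3
        have h6 := Complex.ofReal_injective h5
        linarith
      calc ‖(φ y) Ψ‖ = Real.sqrt (‖(φ y) Ψ‖ ^ 2) := by
            rw [Real.sqrt_sq (norm_nonneg _)]
        _ = Real.sqrt (inner ℝ y y : ℝ) := by rw [h]
    have habs : ∀ z₁ z₂ : Y, ‖(inner ℂ Ψ ((φ z₁) ((φ z₂) Ψ)) : ℂ)‖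
        ≤ Real.sqrt (inner ℝ z₁ z₁ : ℝ) * Real.sqrt (inner ℝ z₂ z₂ : ℝ) := by
      intro z₁ z₂
      rw [← hsym z₁]
      calc ‖(inner ℂ ((φ z₁) Ψ) ((φ z₂) Ψ) : ℂ)‖
          ≤ ‖(φ z₁) Ψ‖ * ‖(φ z₂) Ψ‖ := by
            simpa using norm_inner_le_norm (𝕜 := ℂ) ((φ z₁) Ψ) ((φ z₂) Ψ)
        _ = Real.sqrt (inner ℝ z₁ z₁ : ℝ) * Real.sqrt (inner ℝ z₂ z₂ : ℝ) := by
            rw [hnorm, hnorm]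
    have h2 := hΩim y₁ y₂
    rw [h2]
    have him : |(inner ℂ Ψ ((φ y₁) ((φ y₂) Ψ)) : ℂ).im|
        ≤ ‖(inner ℂ Ψ ((φ y₁) ((φ y₂) Ψ)) : ℂ)‖ := Complex.abs_im_le_norm _
    calc ‖((2 * (inner ℂ Ψ ((φ y₁) ((φ y₂) Ψ)) : ℂ).im : ℝ) : ℂ)‖
        = 2 * |(inner ℂ Ψ ((φ y₁) ((φ y₂) Ψ)) : ℂ).im| := by
          rw [Complex.norm_real, Real.norm_eq_abs, abs_mul]; norm_num
      _ ≤ 2 * ‖(inner ℂ Ψ ((φ y₁) ((φ y₂) Ψ)) : ℂ)‖ := by linarith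
      _ ≤ 2 * (Real.sqrt (inner ℝ y₁ y₁ : ℝ) * Real.sqrt (inner ℝ y₂ y₂ : ℝ)) := by
          have := habs y₁ y₂; linarith
      _ = 2 * Real.sqrt (inner ℝ y₁ y₁ : ℝ) * Real.sqrt (inner ℝ y₂ y₂ : ℝ) := by ring
end

section
/- Let Y be a real Hilbert space and let j be a bounded linear operator on Y which is orthogonal (preserves the inner product and is bijective) and satisfies j² = −1, and define the symplectic form ω(y₁,y₂) := ⟨j y₁, y₂⟩. Let Sp(Y) denote the group of bounded invertible linear operators r on Y with ω(ry₁, ry₂) = ω(y₁,y₂) for all y₁, y₂. Then: (i) for r ∈ Sp(Y), the operator j − r j r⁻¹ is Hilbert–Schmidt if and only if r j − j r is Hilbert–Schmidt; (ii) the set Sp₂(Y) := {r ∈ Sp(Y) : r j − j r is Hilbert–Schmidt} is a subgroup of Sp(Y): it contains the identity and is closed under products and inverses. -/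
/-- A bounded operator on a real Hilbert space is Hilbert–Schmidt if the sum
`Σ_i ‖T e_i‖²` is finite for some Hilbert (orthonormal) basis `(e_i)`. -/
def IsHilbertSchmidt {Y : Type} [NormedAddCommGroup Y] [InnerProductSpace ℝ Y]
    (T : Y →L[ℝ] Y) : Prop :=
  ∃ (ι : Type) (b : HilbertBasis ι ℝ Y), Summable fun i => ‖T (b i)‖ ^ 2

/-- Membership in the symplectic group: `r` preserves `ω(y₁,y₂) = ⟨j y₁, y₂⟩`. -/
def IsSymplectic {Y : Type} [NormedAddCommGroup Y] [InnerProductSpace ℝ Y]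
    (j : Y →L[ℝ] Y) (r : Y ≃L[ℝ] Y) : Prop :=
  ∀ y₁ y₂ : Y, (inner ℝ (j (r y₁)) (r y₂) : ℝ) = inner ℝ (j y₁) y₂

open ContinuousLinearMap in
lemma norm_sq_eq_tsum' {Y : Type} [NormedAddCommGroup Y] [InnerProductSpace ℝ Y]
    {ι : Type} (b : HilbertBasis ι ℝ Y) (x : Y) :
    ‖x‖ ^ 2 = ∑' i, (inner ℝ x (b i) : ℝ) ^ 2 := by
  have := b.tsum_inner_mul_inner x x
  rw [real_inner_self_eq_norm_sq] at this
  rw [← this]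
  congr 1; ext i
  rw [real_inner_comm (b i) x, sq]

lemma summable_sq_inner' {Y : Type} [NormedAddCommGroup Y] [InnerProductSpace ℝ Y]
    {ι : Type} (b : HilbertBasis ι ℝ Y) (x : Y) :
    Summable fun i => (inner ℝ x (b i) : ℝ) ^ 2 := by
  have := b.summable_inner_mul_inner x x
  refine this.congr fun i => ?_
  rw [real_inner_comm (b i) x, sq]

section HS
open ContinuousLinearMap
variable {Y : Type} [NormedAddCommGroup Y] [InnerProductSpace ℝ Y] [CompleteSpace Y]

lemma hs_adjoint_summable (T : Y →L[ℝ] Y) {ι κ : Type}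
    (b : HilbertBasis ι ℝ Y) (c : HilbertBasis κ ℝ Y)
    (h : Summable fun i => ‖T (b i)‖ ^ 2) :
    Summable fun k => ‖(adjoint T) (c k)‖ ^ 2 := by
  have hsumf : Summable (fun p : ι × κ => (inner ℝ (T (b p.1)) (c p.2) : ℝ) ^ 2) := by
    refine (summable_prod_of_nonneg (fun p => sq_nonneg _)).mpr
      ⟨fun i => summable_sq_inner' c (T (b i)), h.congr fun i => norm_sq_eq_tsum' c (T (b i))⟩
  have hswap : Summable (fun p : κ × ι => (inner ℝ (T (b p.2)) (c p.1) : ℝ) ^ 2) :=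
    hsumf.prod_symm
  have h2 := ((summable_prod_of_nonneg (fun p : κ × ι => sq_nonneg _)).mp hswap).2
  refine h2.congr fun k => ?_
  rw [norm_sq_eq_tsum' b]
  congr 1; ext i
  rw [adjoint_inner_left, real_inner_comm]

lemma IsHilbertSchmidt.adjoint' {T : Y →L[ℝ] Y} (h : IsHilbertSchmidt T) :
    IsHilbertSchmidt (adjoint T) := by
  obtain ⟨ι, b, hb⟩ := h
  exact ⟨ι, b, hs_adjoint_summable T b b hb⟩

lemma IsHilbertSchmidt.summable_any {T : Y →L[ℝ] Y} (h : IsHilbertSchmidt T)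
    {κ : Type} (c : HilbertBasis κ ℝ Y) :
    Summable fun k => ‖T (c k)‖ ^ 2 := by
  obtain ⟨ι, b, hb⟩ := h
  have h2 := hs_adjoint_summable (adjoint T) b c (hs_adjoint_summable T b b hb)
  rwa [adjoint_adjoint] at h2

lemma IsHilbertSchmidt.comp_left {T : Y →L[ℝ] Y} (h : IsHilbertSchmidt T) (A : Y →L[ℝ] Y) :
    IsHilbertSchmidt (A ∘L T) := by
  obtain ⟨ι, b, hb⟩ := h
  refine ⟨ι, b, Summable.of_nonneg_of_le (fun i => sq_nonneg _) (fun i => ?_)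
    (hb.mul_left (‖A‖ ^ 2))⟩
  simp only [coe_comp', Function.comp_apply]
  calc ‖A (T (b i))‖ ^ 2 ≤ (‖A‖ * ‖T (b i)‖) ^ 2 := by
        gcongr
        exact A.le_opNorm _
    _ = ‖A‖ ^ 2 * ‖T (b i)‖ ^ 2 := by ring

lemma IsHilbertSchmidt.comp_right {T : Y →L[ℝ] Y} (h : IsHilbertSchmidt T) (A : Y →L[ℝ] Y) :
    IsHilbertSchmidt (T ∘L A) := by
  have h2 := (h.adjoint'.comp_left (adjoint A)).adjoint'
  rwa [← adjoint_comp, adjoint_adjoint] at h2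

lemma IsHilbertSchmidt.neg' {T : Y →L[ℝ] Y} (h : IsHilbertSchmidt T) :
    IsHilbertSchmidt (-T) := by
  obtain ⟨ι, b, hb⟩ := h
  exact ⟨ι, b, by simpa using hb⟩

lemma sq_add_le_two_mul {a b : ℝ} (ha : 0 ≤ a) (hb : 0 ≤ b) :
    (a + b) ^ 2 ≤ 2 * (a ^ 2 + b ^ 2) := by nlinarith [sq_nonneg (a - b)]

lemma IsHilbertSchmidt.add' {S T : Y →L[ℝ] Y} (hS : IsHilbertSchmidt S)
    (hT : IsHilbertSchmidt T) : IsHilbertSchmidt (S + T) := by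
  obtain ⟨ι, b, hb⟩ := hS
  have hT' := hT.summable_any b
  refine ⟨ι, b, Summable.of_nonneg_of_le (fun i => sq_nonneg _) (fun i => ?_)
    ((hb.add hT').mul_left 2)⟩
  simp only [add_apply]
  calc ‖S (b i) + T (b i)‖ ^ 2 ≤ (‖S (b i)‖ + ‖T (b i)‖) ^ 2 := by
        gcongr
        exact norm_add_le _ _
    _ ≤ 2 * (‖S (b i)‖ ^ 2 + ‖T (b i)‖ ^ 2) := sq_add_le_two_mul (norm_nonneg _) (norm_nonneg _)

lemma isHilbertSchmidt_zero : IsHilbertSchmidt (0 : Y →L[ℝ] Y) := by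
  obtain ⟨w, b, -⟩ := exists_hilbertBasis ℝ Y
  exact ⟨w, b, by simpa using summable_zero⟩

end HS

/-- The group `Sp₂(Y)`.
Let `j` be an orthogonal complex structure (`j² = −1`) on a real Hilbert space `Y` and
`ω(y₁,y₂) = ⟨j y₁, y₂⟩` the associated symplectic form.  Then for `r ∈ Sp(Y)`:
(i) `j − r j r⁻¹` is Hilbert–Schmidt iff `r j − j r` is; and (ii) the set `Sp₂(Y)` of
symplectic `r` with `r j − j r` Hilbert–Schmidt contains the identity and is closed
under products and inverses. -/
theorem sp2_is_a_group
    {Y : Type} [NormedAddCommGroup Y] [InnerProductSpace ℝ Y] [CompleteSpace Y]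
    (j : Y →L[ℝ] Y)
    (hj_orth : ∀ y₁ y₂ : Y, (inner ℝ (j y₁) (j y₂) : ℝ) = inner ℝ y₁ y₂)
    (hj_surj : Function.Surjective j)
    (hj2 : j ∘L j = -1) :
    (∀ r : Y ≃L[ℝ] Y, IsSymplectic j r →
      (IsHilbertSchmidt (j - (r : Y →L[ℝ] Y) ∘L j ∘L (r.symm : Y →L[ℝ] Y)) ↔
        IsHilbertSchmidt ((r : Y →L[ℝ] Y) ∘L j - j ∘L (r : Y →L[ℝ] Y)))) ∧
    (IsSymplectic j (ContinuousLinearEquiv.refl ℝ Y) ∧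
      IsHilbertSchmidt
        (((ContinuousLinearEquiv.refl ℝ Y : Y →L[ℝ] Y)) ∘L j -
          j ∘L (ContinuousLinearEquiv.refl ℝ Y : Y →L[ℝ] Y))) ∧
    (∀ r s : Y ≃L[ℝ] Y,
      IsSymplectic j r → IsHilbertSchmidt ((r : Y →L[ℝ] Y) ∘L j - j ∘L (r : Y →L[ℝ] Y)) →
      IsSymplectic j s → IsHilbertSchmidt ((s : Y →L[ℝ] Y) ∘L j - j ∘L (s : Y →L[ℝ] Y)) →
      IsSymplectic j (r.trans s) ∧
        IsHilbertSchmidt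
          ((r.trans s : Y →L[ℝ] Y) ∘L j - j ∘L (r.trans s : Y →L[ℝ] Y))) ∧
    (∀ r : Y ≃L[ℝ] Y,
      IsSymplectic j r → IsHilbertSchmidt ((r : Y →L[ℝ] Y) ∘L j - j ∘L (r : Y →L[ℝ] Y)) →
      IsSymplectic j r.symm ∧
        IsHilbertSchmidt
          ((r.symm : Y →L[ℝ] Y) ∘L j - j ∘L (r.symm : Y →L[ℝ] Y))) := by

  classical
  have part1 : ∀ r : Y ≃L[ℝ] Y, IsSymplectic j r →
      (IsHilbertSchmidt (j - (r : Y →L[ℝ] Y) ∘L j ∘L (r.symm : Y →L[ℝ] Y)) ↔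
        IsHilbertSchmidt ((r : Y →L[ℝ] Y) ∘L j - j ∘L (r : Y →L[ℝ] Y))) := by
    intro r _
    constructor
    · intro h
      have h2 := h.comp_right (r : Y →L[ℝ] Y)
      have heq : (j - (r : Y →L[ℝ] Y) ∘L j ∘L (r.symm : Y →L[ℝ] Y)) ∘L (r : Y →L[ℝ] Y)
          = -((r : Y →L[ℝ] Y) ∘L j - j ∘L (r : Y →L[ℝ] Y)) := by
        ext x
        simp [ContinuousLinearEquiv.symm_apply_apply]
      rw [heq] at h2
      simpa using h2.neg'
    · intro h
      have h2 := h.comp_right (r.symm : Y →L[ℝ] Y)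
      have heq : ((r : Y →L[ℝ] Y) ∘L j - j ∘L (r : Y →L[ℝ] Y)) ∘L (r.symm : Y →L[ℝ] Y)
          = -(j - (r : Y →L[ℝ] Y) ∘L j ∘L (r.symm : Y →L[ℝ] Y)) := by
        ext x
        simp [ContinuousLinearEquiv.apply_symm_apply]
      rw [heq] at h2
      simpa using h2.neg'
  refine ⟨part1, ⟨?_, ?_⟩, ?_, ?_⟩
  · intro y₁ y₂; rfl
  · have h0 : ((ContinuousLinearEquiv.refl ℝ Y : Y →L[ℝ] Y)) ∘L j -
        j ∘L (ContinuousLinearEquiv.refl ℝ Y : Y →L[ℝ] Y) = 0 := by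
      ext x; simp
    rw [h0]; exact isHilbertSchmidt_zero
  · intro r s hr hrHS hs hsHS
    refine ⟨fun y₁ y₂ => ?_, ?_⟩
    · simp only [ContinuousLinearEquiv.trans_apply]
      rw [hs, hr]
    · have heq : ((r.trans s : Y ≃L[ℝ] Y) : Y →L[ℝ] Y) ∘L j -
          j ∘L ((r.trans s : Y ≃L[ℝ] Y) : Y →L[ℝ] Y)
          = (s : Y →L[ℝ] Y) ∘L ((r : Y →L[ℝ] Y) ∘L j - j ∘L (r : Y →L[ℝ] Y)) +
            ((s : Y →L[ℝ] Y) ∘L j - j ∘L (s : Y →L[ℝ] Y)) ∘L (r : Y →L[ℝ] Y) := by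
        ext x
        simp [ContinuousLinearEquiv.trans_apply, map_sub]
      rw [heq]
      exact (hrHS.comp_left _).add' (hsHS.comp_right _)
  · intro r hr hrHS
    refine ⟨fun y₁ y₂ => ?_, ?_⟩
    · have h3 := hr (r.symm y₁) (r.symm y₂)
      rw [r.apply_symm_apply, r.apply_symm_apply] at h3
      exact h3.symm
    · have heq : (r.symm : Y →L[ℝ] Y) ∘L j - j ∘L (r.symm : Y →L[ℝ] Y)
          = -((r.symm : Y →L[ℝ] Y) ∘L (((r : Y →L[ℝ] Y) ∘L j - j ∘L (r : Y →L[ℝ] Y))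
              ∘L (r.symm : Y →L[ℝ] Y))) := by
        ext x
        simp [map_sub, ContinuousLinearEquiv.symm_apply_apply, ContinuousLinearEquiv.apply_symm_apply]
      rw [heq]
      exact ((hrHS.comp_right _).comp_left _).neg'
end

section
/- Let V₁ and V₂ be closed subspaces of a (real or complex) Hilbert space H, and let p₁, p₂ be the orthogonal projections onto V₁ and V₂ respectively. Then (V₁ ∩ V₂) + (V₁^⊥ ∩ V₂^⊥) = ker(p₁ − p₂); that is, a vector z satisfies p₁ z = p₂ z if and only if z is the sum of a vector in V₁ ∩ V₂ and a vector in V₁^⊥ ∩ V₂^⊥. -/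
lemma proj_unique_aux {𝕜 : Type*} [RCLike 𝕜]
    {H : Type*} [NormedAddCommGroup H] [InnerProductSpace 𝕜 H]
    {V : Submodule 𝕜 H} {x u w : H}
    (hu : u ∈ V) (hu' : x - u ∈ Vᗮ) (hw : w ∈ V) (hw' : x - w ∈ Vᗮ) : u = w := by
  have h1 : u - w ∈ V := V.sub_mem hu hw
  have h2 : u - w ∈ Vᗮ := by
    have := Vᗮ.sub_mem hw' hu'
    simpa [sub_sub_sub_cancel_left] using this
  have h0 : (inner 𝕜 (u - w) (u - w) : 𝕜) = 0 := by
    exact (Submodule.mem_orthogonal _ _).1 h2 (u - w) h1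
  exact sub_eq_zero.1 (inner_self_eq_zero.1 h0)

/-- For two closed subspaces `V₁, V₂` of a (real or complex) Hilbert space
with orthogonal projections `p₁, p₂`, one has
`(V₁ ∩ V₂) + (V₁^⊥ ∩ V₂^⊥) = ker (p₁ − p₂)`:
`p₁ z = p₂ z` iff `z = u + v` with `u ∈ V₁ ∩ V₂` and `v ∈ V₁^⊥ ∩ V₂^⊥`. -/
theorem ker_difference_of_projections
    {𝕜 : Type*} [RCLike 𝕜]
    {H : Type*} [NormedAddCommGroup H] [InnerProductSpace 𝕜 H] [CompleteSpace H]
    (V₁ V₂ : Submodule 𝕜 H)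
    (hV₁ : IsClosed (V₁ : Set H)) (hV₂ : IsClosed (V₂ : Set H))
    (p₁ p₂ : H →L[𝕜] H)
    -- `p₁` is the orthogonal projection onto `V₁`
    (hp₁ : ∀ x : H, p₁ x ∈ V₁ ∧ x - p₁ x ∈ V₁ᗮ)
    -- `p₂` is the orthogonal projection onto `V₂`
    (hp₂ : ∀ x : H, p₂ x ∈ V₂ ∧ x - p₂ x ∈ V₂ᗮ) :
    ∀ z : H, p₁ z = p₂ z ↔
      ∃ u ∈ V₁ ⊓ V₂, ∃ v ∈ V₁ᗮ ⊓ V₂ᗮ, z = u + v := by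
  intro z
  constructor
  · intro h
    refine ⟨p₁ z, ⟨(hp₁ z).1, h ▸ (hp₂ z).1⟩, z - p₁ z, ⟨(hp₁ z).2, h ▸ (hp₂ z).2⟩, by abel⟩
  · rintro ⟨u, ⟨hu1, hu2⟩, v, ⟨hv1, hv2⟩, rfl⟩
    have e1 : p₁ (u + v) = u := proj_unique_aux (hp₁ (u+v)).1 (hp₁ (u+v)).2 hu1 (by simpa using hv1)
    have e2 : p₂ (u + v) = u := proj_unique_aux (hp₂ (u+v)).1 (hp₂ (u+v)).2 hu2 (by simpa using hv2)
    rw [e1, e2]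
end

section
/- Let V be a closed real subspace of a complex Hilbert space W (i.e., a closed subspace of W viewed as a real Hilbert space with inner product Re⟨·,·⟩). Let p and q be the (real-linear) orthogonal projections of W onto V and onto iV respectively, taken with respect to Re⟨·,·⟩, and let V^perp := {z ∈ W : Re⟨v, z⟩ = 0 for all v ∈ V}. Then: (1) V ∩ iV = {0} and V^perp ∩ iV^perp = {0} if and only if ker(p − q) = {0}; (2) V^perp ∩ iV = {0} if and only if ker(p + q − 1) = {0}. -/
/-- The real orthogonal complement of a set in a complex Hilbert space:
`{z : ∀ v ∈ S, Re⟨v, z⟩ = 0}`. -/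
def realPerp {W : Type*} [NormedAddCommGroup W] [InnerProductSpace ℂ W]
    (S : Set W) : Set W :=
  {z | ∀ v ∈ S, (inner ℂ v z : ℂ).re = 0}

/-- The set `iS = {i • v : v ∈ S}`. -/
def iSet {W : Type*} [NormedAddCommGroup W] [InnerProductSpace ℂ W]
    (S : Set W) : Set W :=
  (fun v => Complex.I • v) '' S

section Aux

variable {W : Type*} [NormedAddCommGroup W] [InnerProductSpace ℂ W]

lemma realPerp_zero_mem (S : Set W) : (0 : W) ∈ realPerp S := by
  intro v _; simp

lemma realPerp_sub_mem {S : Set W} {a b : W} (ha : a ∈ realPerp S)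
    (hb : b ∈ realPerp S) : a - b ∈ realPerp S := by
  intro v hv
  rw [inner_sub_right, Complex.sub_re, ha v hv, hb v hv, sub_zero]

lemma mem_self_perp_eq_zero {S : Set W} {x : W} (hx : x ∈ S)
    (hperp : x ∈ realPerp S) : x = 0 := by
  have h : (inner ℂ x x : ℂ).re = 0 := hperp x hx
  have hn := inner_self_eq_norm_sq (𝕜 := ℂ) x
  have h2 : ‖x‖ ^ 2 = 0 := by rw [← hn]; exact h
  simpa using h2

lemma iSet_zero_mem (V : Submodule ℝ W) : (0 : W) ∈ iSet (V : Set W) :=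
  ⟨0, V.zero_mem, smul_zero _⟩

lemma iSet_sub_mem (V : Submodule ℝ W) {a b : W} (ha : a ∈ iSet (V : Set W))
    (hb : b ∈ iSet (V : Set W)) : a - b ∈ iSet (V : Set W) := by
  obtain ⟨u, hu, rfl⟩ := ha
  obtain ⟨w, hw, rfl⟩ := hb
  exact ⟨u - w, V.sub_mem hu hw, by simp [smul_sub]⟩

end Aux

/-- Let `V` be a closed real subspace of a complex Hilbert space `W`, `p`
and `q` the real-orthogonal projections onto `V` and `iV`.  Then
(1) `V ∩ iV = {0}` and `V^perp ∩ iV^perp = {0}` iff `ker (p − q) = {0}`;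
(2) `V^perp ∩ iV = {0}` iff `ker (p + q − 1) = {0}`. -/
theorem real_subspace_projection_kernels
    {W : Type*} [NormedAddCommGroup W] [InnerProductSpace ℂ W] [CompleteSpace W]
    (V : Submodule ℝ W) (hV : IsClosed (V : Set W))
    (p q : W →L[ℝ] W)
    (hp : ∀ x : W, p x ∈ V ∧ x - p x ∈ realPerp (V : Set W))
    (hq : ∀ x : W, q x ∈ iSet (V : Set W) ∧ x - q x ∈ realPerp (iSet (V : Set W))) :
    (((V : Set W) ∩ iSet (V : Set W) = {0} ∧
        realPerp (V : Set W) ∩ realPerp (iSet (V : Set W)) = {0}) ↔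
      (∀ z : W, p z = q z → z = 0)) ∧
    ((realPerp (V : Set W) ∩ iSet (V : Set W) = {0}) ↔
      (∀ z : W, p z + q z = z → z = 0)) := by
  -- p fixes V
  have fix_p : ∀ z ∈ V, p z = z := by
    intro z hz
    have h0 : z - p z = 0 :=
      mem_self_perp_eq_zero (V.sub_mem hz (hp z).1) (hp z).2
    exact (sub_eq_zero.mp h0).symm
  -- p kills realPerp V
  have p_perp : ∀ z ∈ realPerp (V : Set W), p z = 0 := by
    intro z hz
    have hmem : p z ∈ realPerp (V : Set W) := by
      have := realPerp_sub_mem hz (hp z).2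
      simpa using this
    exact mem_self_perp_eq_zero ((hp z).1 : p z ∈ (V : Set W)) hmem
  -- q fixes iSet V
  have fix_q : ∀ z ∈ iSet (V : Set W), q z = z := by
    intro z hz
    have h0 : z - q z = 0 :=
      mem_self_perp_eq_zero (iSet_sub_mem V hz (hq z).1) (hq z).2
    exact (sub_eq_zero.mp h0).symm
  -- q kills realPerp (iSet V)
  have q_perp : ∀ z ∈ realPerp (iSet (V : Set W)), q z = 0 := by
    intro z hz
    have hmem : q z ∈ realPerp (iSet (V : Set W)) := by
      have := realPerp_sub_mem hz (hq z).2
      simpa using this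
    exact mem_self_perp_eq_zero (hq z).1 hmem
  constructor
  · -- Part (1)
    constructor
    · rintro ⟨h1, h2⟩ z hz
      have hm : p z ∈ (V : Set W) ∩ iSet (V : Set W) := ⟨(hp z).1, by rw [hz]; exact (hq z).1⟩
      rw [h1] at hm
      have hpz : p z = 0 := hm
      have hm2 : z - p z ∈ realPerp (V : Set W) ∩ realPerp (iSet (V : Set W)) :=
        ⟨(hp z).2, by rw [hz]; exact (hq z).2⟩
      rw [h2] at hm2
      have hz2 : z - p z = 0 := hm2
      have : z = p z := sub_eq_zero.mp hz2
      rw [this, hpz]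
    · intro h
      constructor
      · apply Set.eq_singleton_iff_unique_mem.mpr
        refine ⟨⟨V.zero_mem, iSet_zero_mem V⟩, ?_⟩
        rintro z ⟨hz1, hz2⟩
        exact h z (by rw [fix_p z hz1, fix_q z hz2])
      · apply Set.eq_singleton_iff_unique_mem.mpr
        refine ⟨⟨realPerp_zero_mem _, realPerp_zero_mem _⟩, ?_⟩
        rintro z ⟨hz1, hz2⟩
        exact h z (by rw [p_perp z hz1, q_perp z hz2])
  · -- Part (2)
    constructor
    · intro h z hz
      have hqz0 : q z = 0 := by
        have hm : q z ∈ realPerp (V : Set W) ∩ iSet (V : Set W) := by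
          refine ⟨?_, (hq z).1⟩
          have : q z = z - p z := eq_sub_of_add_eq' hz
          rw [this]; exact (hp z).2
        rw [h] at hm
        exact hm
      have hpz : p z = z := by rw [hqz0, add_zero] at hz; exact hz
      have hzV : z ∈ V := hpz ▸ (hp z).1
      have hzPerpI : z ∈ realPerp (iSet (V : Set W)) := by
        have := (hq z).2
        rwa [hqz0, sub_zero] at this
      -- show I • z ∈ realPerp V ∩ iSet V, hence I • z = 0, hence z = 0
      have hw : Complex.I • z ∈ realPerp (V : Set W) ∩ iSet (V : Set W) := by
        refine ⟨?_, ⟨z, hzV, rfl⟩⟩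
        intro v hv
        have himz : (inner ℂ (Complex.I • v) z : ℂ).re = 0 :=
          hzPerpI (Complex.I • v) ⟨v, hv, rfl⟩
        rw [inner_smul_left, Complex.conj_I] at himz
        rw [inner_smul_right]
        simp only [Complex.mul_re, Complex.neg_re, Complex.neg_im, Complex.I_re,
          Complex.I_im] at himz ⊢
        linarith
      rw [h] at hw
      have hw0 : Complex.I • z = 0 := hw
      rcases smul_eq_zero.mp hw0 with hI | hz0
      · exact absurd hI Complex.I_ne_zero
      · exact hz0
    · intro h
      apply Set.eq_singleton_iff_unique_mem.mpr
      refine ⟨⟨realPerp_zero_mem _, iSet_zero_mem V⟩, ?_⟩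
      rintro z ⟨hz1, hz2⟩
      exact h z (by rw [p_perp z hz1, fix_q z hz2, zero_add])
end

section
/- Let V be a closed real subspace of a complex Hilbert space W, with real orthogonal complement V^perp := {z ∈ W : Re⟨v, z⟩ = 0 for all v ∈ V}. Define W₊ := V ∩ iV, W₋ := V^perp ∩ iV^perp, W₁ := the closure of (V ∩ iV^perp) + (iV ∩ V^perp), and W₀ := the orthogonal complement of W₊ + W₋ + W₁ in W. Then: (i) W₊, W₋, W₁, W₀ are closed complex subspaces of W, and W is their orthogonal direct sum W = W₊ ⊕ W₀ ⊕ W₁ ⊕ W₋; (ii) setting V₀ := V ∩ W₀ and V₁ := V ∩ iV^perp, one has V = W₊ ⊕ V₀ ⊕ V₁ (an orthogonal sum, with V ∩ W₋ = {0}); (iii) V₀ is in general position as a real subspace of W₀, i.e., within W₀ one has V₀ ∩ iV₀ = {0}, V₀^perp ∩ iV₀^perp = {0} and V₀^perp ∩ iV₀ = {0}, the real orthogonal complements being taken inside W₀. -/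
namespace RSCD18
set_option linter.unusedSectionVars false

open Complex Submodule

attribute [local instance] InnerProductSpace.complexToReal

variable {W : Type*} [NormedAddCommGroup W] [InnerProductSpace ℂ W]

lemma rinner (x y : W) : (inner ℝ x y : ℝ) = (inner ℂ x y : ℂ).re := rfl

lemma I_smul_I_smul (x : W) : Complex.I • Complex.I • x = -x := by
  rw [smul_smul, Complex.I_mul_I, neg_one_smul]

lemma inner_I_I (x y : W) : (inner ℂ (Complex.I • x) (Complex.I • y) : ℂ) = inner ℂ x y := by
  rw [inner_smul_left, inner_smul_right, Complex.conj_I, ← mul_assoc]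
  simp

lemma rinner_I_I (x y : W) : (inner ℝ (Complex.I • x) (Complex.I • y) : ℝ) = inner ℝ x y := by
  rw [rinner, inner_I_I]; rfl

lemma rinner_I_left (x y : W) :
    (inner ℝ (Complex.I • x) y : ℝ) = - (inner ℝ x (Complex.I • y) : ℝ) := by
  rw [rinner, rinner, inner_smul_left, inner_smul_right, Complex.conj_I]
  simp

/-- complex inner vanishes if the real parts vanish for `x` and `I•x`. -/
lemma inner_eq_zero_of_re (x y : W) (h1 : (inner ℂ x y : ℂ).re = 0)
    (h2 : (inner ℂ (Complex.I • x) y : ℂ).re = 0) : (inner ℂ x y : ℂ) = 0 := by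
  have : (inner ℂ (Complex.I • x) y : ℂ) = -Complex.I * inner ℂ x y := by
    rw [inner_smul_left, Complex.conj_I]
  rw [this] at h2
  apply Complex.ext h1
  simpa using h2

def iSub (p : Submodule ℝ W) : Submodule ℝ W where
  carrier := iSet (p : Set W)
  zero_mem' := ⟨0, p.zero_mem, smul_zero _⟩
  add_mem' := by
    rintro a b ⟨a', ha, rfl⟩ ⟨b', hb, rfl⟩
    exact ⟨a' + b', p.add_mem ha hb, by simp [smul_add]⟩
  smul_mem' := by
    rintro r x ⟨a, ha, rfl⟩
    exact ⟨r • a, p.smul_mem r ha, smul_comm Complex.I r a⟩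

lemma iSub_coe (p : Submodule ℝ W) : (iSub p : Set W) = iSet (p : Set W) := rfl

lemma mem_iSub {p : Submodule ℝ W} {x : W} : x ∈ iSub p ↔ -(Complex.I • x) ∈ p := by
  constructor
  · rintro ⟨v, hv, rfl⟩
    rw [I_smul_I_smul, neg_neg]; exact hv
  · intro h
    exact ⟨-(Complex.I • x), h, by simp [smul_neg, I_smul_I_smul]⟩

lemma I_smul_mem_iSub {p : Submodule ℝ W} {x : W} (hx : x ∈ p) : Complex.I • x ∈ iSub p :=
  ⟨x, hx, rfl⟩

lemma realPerp_coe (p : Submodule ℝ W) : realPerp (p : Set W) = (pᗮ : Set W) := rfl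

lemma realPerp_union (S T : Set W) : realPerp (S ∪ T) = realPerp S ∩ realPerp T := by
  ext z
  simp only [realPerp, Set.mem_setOf_eq, Set.mem_union, Set.mem_inter_iff, or_imp, forall_and]

lemma isClosed_iSub {p : Submodule ℝ W} (hp : IsClosed (p : Set W)) :
    IsClosed (iSub p : Set W) := by
  have : (iSub p : Set W) = (fun x : W => -(Complex.I • x)) ⁻¹' (p : Set W) := by
    ext x; exact mem_iSub
  rw [this]
  exact hp.preimage ((continuous_const_smul Complex.I).neg)

lemma iSub_orthogonal (p : Submodule ℝ W) : iSub (pᗮ) = (iSub p)ᗮ := by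
  ext x
  rw [mem_iSub, Submodule.mem_orthogonal, Submodule.mem_orthogonal]
  constructor
  · rintro h u ⟨v, hv, rfl⟩
    have h2 := h v hv
    rw [inner_neg_right] at h2
    show (inner ℝ (Complex.I • v) x : ℝ) = 0
    rw [rinner_I_left]
    linarith
  · intro h v hv
    have h2 := h (Complex.I • v) (I_smul_mem_iSub hv)
    rw [rinner_I_left] at h2
    rw [inner_neg_right]
    linarith

variable (V : Submodule ℝ W)

noncomputable def Qp : Submodule ℝ W := V ⊓ iSub V
noncomputable def Qm : Submodule ℝ W := Vᗮ ⊓ (iSub V)ᗮ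
noncomputable def Q1 : Submodule ℝ W := V ⊓ iSub Vᗮ
noncomputable def Q1' : Submodule ℝ W := iSub V ⊓ Vᗮ
noncomputable def M1 : Submodule ℝ W := (Q1 V ⊔ Q1' V).topologicalClosure
noncomputable def M0 : Submodule ℝ W := ((Qp V)ᗮ ⊓ (Qm V)ᗮ) ⊓ (M1 V)ᗮ

variable {V}

lemma Qm_eq : Qm V = Qp (Vᗮ) := by
  rw [Qm, Qp, iSub_orthogonal]

lemma Qp_I {x : W} (hx : x ∈ Qp V) : Complex.I • x ∈ Qp V := by
  obtain ⟨h1, h2⟩ := hx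
  refine ⟨?_, I_smul_mem_iSub h1⟩
  have := mem_iSub.1 h2
  simpa using V.neg_mem (mem_iSub.1 h2)

lemma Qm_I {x : W} (hx : x ∈ Qm V) : Complex.I • x ∈ Qm V := by
  rw [Qm_eq] at hx ⊢; exact Qp_I hx

lemma Q1_to_Q1' {x : W} (hx : x ∈ Q1 V) : Complex.I • x ∈ Q1' V := by
  obtain ⟨h1, h2⟩ := hx
  exact ⟨I_smul_mem_iSub h1, by simpa using (Vᗮ).neg_mem (mem_iSub.1 h2)⟩

lemma Q1'_to_Q1 {x : W} (hx : x ∈ Q1' V) : Complex.I • x ∈ Q1 V := by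
  obtain ⟨h1, h2⟩ := hx
  exact ⟨by simpa using V.neg_mem (mem_iSub.1 h1), I_smul_mem_iSub h2⟩

lemma sup_I {x : W} (hx : x ∈ Q1 V ⊔ Q1' V) : Complex.I • x ∈ Q1 V ⊔ Q1' V := by
  obtain ⟨a, ha, b, hb, rfl⟩ := Submodule.mem_sup.1 hx
  rw [smul_add]
  exact Submodule.add_mem _ (Submodule.mem_sup_right (Q1_to_Q1' ha))
    (Submodule.mem_sup_left (Q1'_to_Q1 hb))

lemma M1_I {x : W} (hx : x ∈ M1 V) : Complex.I • x ∈ M1 V := by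
  have hmt : Set.MapsTo (fun y : W => Complex.I • y) (Q1 V ⊔ Q1' V : Submodule ℝ W)
      (Q1 V ⊔ Q1' V : Submodule ℝ W) := fun y hy => sup_I hy
  have := hmt.closure (continuous_const_smul Complex.I)
  have hx' : x ∈ closure ((Q1 V ⊔ Q1' V : Submodule ℝ W) : Set W) := hx
  exact this hx'

lemma orth_I {p : Submodule ℝ W} (hp : ∀ y ∈ p, Complex.I • y ∈ p) {x : W}
    (hx : x ∈ pᗮ) (u : W) (hu : u ∈ p) : (inner ℝ u (Complex.I • x) : ℝ) = 0 := by
  have h2 := (Submodule.mem_orthogonal _ _).1 hx (Complex.I • u) (hp u hu)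
  rw [rinner_I_left] at h2
  linarith

lemma orth_I' {p : Submodule ℝ W} (hp : ∀ y ∈ p, Complex.I • y ∈ p) {x : W}
    (hx : x ∈ pᗮ) : Complex.I • x ∈ pᗮ :=
  (Submodule.mem_orthogonal _ _).2 (fun u hu => orth_I hp hx u hu)

lemma M0_I {x : W} (hx : x ∈ M0 V) : Complex.I • x ∈ M0 V := by
  obtain ⟨⟨h1, h2⟩, h3⟩ := hx
  exact ⟨⟨orth_I' (fun y hy => Qp_I hy) h1, orth_I' (fun y hy => Qm_I hy) h2⟩,
    orth_I' (fun y hy => M1_I hy) h3⟩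

lemma roQpQ1 {x y : W} (hx : x ∈ Qp V) (hy : y ∈ Q1 V) : (inner ℝ x y : ℝ) = 0 := by
  have h2 : y ∈ (iSub V)ᗮ := by rw [← iSub_orthogonal]; exact hy.2
  exact Submodule.inner_right_of_mem_orthogonal hx.2 h2

lemma roQpQ1' {x y : W} (hx : x ∈ Qp V) (hy : y ∈ Q1' V) : (inner ℝ x y : ℝ) = 0 :=
  Submodule.inner_right_of_mem_orthogonal hx.1 hy.2

lemma roQmQ1 {x y : W} (hx : x ∈ Qm V) (hy : y ∈ Q1 V) : (inner ℝ x y : ℝ) = 0 :=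
  Submodule.inner_left_of_mem_orthogonal hy.1 hx.1

lemma roQmQ1' {x y : W} (hx : x ∈ Qm V) (hy : y ∈ Q1' V) : (inner ℝ x y : ℝ) = 0 :=
  Submodule.inner_left_of_mem_orthogonal hy.1 hx.2

lemma roQ1Q1' {x y : W} (hx : x ∈ Q1 V) (hy : y ∈ Q1' V) : (inner ℝ x y : ℝ) = 0 :=
  Submodule.inner_right_of_mem_orthogonal hx.1 hy.2

variable [CompleteSpace W]

lemma M1_orthogonal : (M1 V)ᗮ = (Q1 V ⊔ Q1' V)ᗮ := by
  rw [M1, ← Submodule.orthogonal_orthogonal_eq_closure, Submodule.triorthogonal_eq_orthogonal]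

lemma mem_M1_orth {x : W} (h1 : ∀ y ∈ Q1 V, (inner ℝ y x : ℝ) = 0)
    (h1' : ∀ y ∈ Q1' V, (inner ℝ y x : ℝ) = 0) : x ∈ (M1 V)ᗮ := by
  rw [M1_orthogonal]
  refine (Submodule.mem_orthogonal _ _).2 (fun u hu => ?_)
  obtain ⟨a, ha, b, hb, rfl⟩ := Submodule.mem_sup.1 hu
  rw [inner_add_left, h1 a ha, h1' b hb, add_zero]

lemma Qp_le_M1_orth {x : W} (hx : x ∈ Qp V) : x ∈ (M1 V)ᗮ :=
  mem_M1_orth (fun y hy => by rw [real_inner_comm]; exact roQpQ1 hx hy)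
    (fun y hy => by rw [real_inner_comm]; exact roQpQ1' hx hy)

lemma Qm_le_M1_orth {x : W} (hx : x ∈ Qm V) : x ∈ (M1 V)ᗮ :=
  mem_M1_orth (fun y hy => by rw [real_inner_comm]; exact roQmQ1 hx hy)
    (fun y hy => by rw [real_inner_comm]; exact roQmQ1' hx hy)

lemma roQpQm {x y : W} (hx : x ∈ Qp V) (hy : y ∈ Qm V) : (inner ℝ x y : ℝ) = 0 :=
  Submodule.inner_right_of_mem_orthogonal hx.1 hy.1

lemma roQpM1 {x y : W} (hx : x ∈ Qp V) (hy : y ∈ M1 V) : (inner ℝ x y : ℝ) = 0 :=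
  Submodule.inner_left_of_mem_orthogonal hy (Qp_le_M1_orth hx)

lemma roQmM1 {x y : W} (hx : x ∈ Qm V) (hy : y ∈ M1 V) : (inner ℝ x y : ℝ) = 0 :=
  Submodule.inner_left_of_mem_orthogonal hy (Qm_le_M1_orth hx)

lemma roM0Qp {x y : W} (hx : x ∈ M0 V) (hy : y ∈ Qp V) : (inner ℝ x y : ℝ) = 0 :=
  Submodule.inner_left_of_mem_orthogonal hy hx.1.1

lemma roM0Qm {x y : W} (hx : x ∈ M0 V) (hy : y ∈ Qm V) : (inner ℝ x y : ℝ) = 0 :=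
  Submodule.inner_left_of_mem_orthogonal hy hx.1.2

lemma roM0M1 {x y : W} (hx : x ∈ M0 V) (hy : y ∈ M1 V) : (inner ℝ x y : ℝ) = 0 :=
  Submodule.inner_left_of_mem_orthogonal hy hx.2

lemma Q1_le_M1 : Q1 V ≤ M1 V :=
  le_trans le_sup_left (Submodule.le_topologicalClosure _)

lemma Q1'_le_M1 : Q1' V ≤ M1 V :=
  le_trans le_sup_right (Submodule.le_topologicalClosure _)

lemma exists_proj (K : Submodule ℝ W) (hK : IsClosed (K : Set W)) (w : W) :
    ∃ p ∈ K, ∀ x ∈ K, (inner ℝ x (w - p) : ℝ) = 0 := by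
  haveI : CompleteSpace K := hK.completeSpace_coe
  obtain ⟨p, hp, hperp⟩ := HasOrthogonalProjection.exists_orthogonal (K := K) w
  exact ⟨p, hp, fun x hx => (Submodule.mem_orthogonal K (w - p)).mp hperp x hx⟩

variable (hV : IsClosed (V : Set W))
include hV

lemma isClosed_Qp : IsClosed (Qp V : Set W) := by
  rw [Qp, Submodule.coe_inf]
  exact hV.inter (isClosed_iSub hV)

lemma isClosed_Q1 : IsClosed (Q1 V : Set W) := by
  rw [Q1, Submodule.coe_inf]
  exact hV.inter (isClosed_iSub V.isClosed_orthogonal)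

omit hV

lemma isClosed_Qm : IsClosed (Qm V : Set W) := by
  rw [Qm, Submodule.coe_inf]
  exact V.isClosed_orthogonal.inter (iSub V).isClosed_orthogonal

lemma isClosed_M1 : IsClosed (M1 V : Set W) :=
  Submodule.isClosed_topologicalClosure _

lemma isClosed_M0 : IsClosed (M0 V : Set W) := by
  rw [M0, Submodule.coe_inf, Submodule.coe_inf]
  exact ((Qp V).isClosed_orthogonal.inter (Qm V).isClosed_orthogonal).inter
    (M1 V).isClosed_orthogonal

include hV

lemma span4 (w : W) :
    ∃ a ∈ Qp V, ∃ b ∈ M0 V, ∃ c ∈ M1 V, ∃ d ∈ Qm V, w = a + b + c + d := by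
  obtain ⟨a, ha, ha2⟩ := exists_proj (Qp V) (isClosed_Qp hV) w
  obtain ⟨c, hc, hc2⟩ := exists_proj (M1 V) (isClosed_M1) w
  obtain ⟨d, hd, hd2⟩ := exists_proj (Qm V) (isClosed_Qm) w
  refine ⟨a, ha, w - a - c - d, ⟨⟨?_, ?_⟩, ?_⟩, c, hc, d, hd, by abel⟩
  · refine (Submodule.mem_orthogonal _ _).2 (fun u hu => ?_)
    have e1 := ha2 u hu
    have e2 := roQpM1 hu hc
    have e3 := roQpQm hu hd
    simp only [inner_sub_right] at e1 ⊢
    linarith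
  · refine (Submodule.mem_orthogonal _ _).2 (fun u hu => ?_)
    have e1 := hd2 u hu
    have e2 : (inner ℝ u a : ℝ) = 0 := by rw [real_inner_comm]; exact roQpQm ha hu
    have e3 : (inner ℝ u c : ℝ) = 0 := roQmM1 hu hc
    simp only [inner_sub_right] at e1 ⊢
    linarith
  · refine (Submodule.mem_orthogonal _ _).2 (fun u hu => ?_)
    have e1 := hc2 u hu
    have e2 : (inner ℝ u a : ℝ) = 0 := by rw [real_inner_comm]; exact roQpM1 ha hu
    have e3 : (inner ℝ u d : ℝ) = 0 := by rw [real_inner_comm]; exact roQmM1 hd hu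
    simp only [inner_sub_right] at e1 ⊢
    linarith

lemma decompV {v : W} (hv : v ∈ V) :
    ∃ a ∈ Qp V, ∃ b ∈ V ⊓ M0 V, ∃ c ∈ Q1 V, v = a + b + c := by
  obtain ⟨a, ha, ha2⟩ := exists_proj (Qp V) (isClosed_Qp hV) v
  obtain ⟨c, hc, hc2⟩ := exists_proj (Q1 V) (isClosed_Q1 hV) v
  refine ⟨a, ha, v - a - c, ⟨V.sub_mem (V.sub_mem hv ha.1) hc.1, ⟨?_, ?_⟩, ?_⟩, c, hc, by abel⟩
  · refine (Submodule.mem_orthogonal _ _).2 (fun u hu => ?_)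
    have e1 := ha2 u hu
    have e2 := roQpQ1 hu hc
    simp only [inner_sub_right] at e1 ⊢
    linarith
  · refine (Submodule.mem_orthogonal _ _).2 (fun u hu => ?_)
    have e1 : (inner ℝ u v : ℝ) = 0 := Submodule.inner_left_of_mem_orthogonal hv hu.1
    have e2 : (inner ℝ u a : ℝ) = 0 := Submodule.inner_left_of_mem_orthogonal ha.1 hu.1
    have e3 : (inner ℝ u c : ℝ) = 0 := Submodule.inner_left_of_mem_orthogonal hc.1 hu.1
    simp only [inner_sub_right]
    linarith
  · refine mem_M1_orth (fun y hy => ?_) (fun y hy => ?_)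
    · have e1 := hc2 y hy
      have e2 : (inner ℝ y a : ℝ) = 0 := by rw [real_inner_comm]; exact roQpQ1 ha hy
      simp only [inner_sub_right] at e1 ⊢
      linarith
    · have e1 : (inner ℝ y v : ℝ) = 0 := Submodule.inner_left_of_mem_orthogonal hv hy.2
      have e2 : (inner ℝ y a : ℝ) = 0 := Submodule.inner_left_of_mem_orthogonal ha.1 hy.2
      have e3 : (inner ℝ y c : ℝ) = 0 := by rw [real_inner_comm]; exact roQ1Q1' hc hy
      simp only [inner_sub_right]
      linarith

omit hV

lemma real_smul_eq (r : ℝ) (y : W) : r • y = (r : ℂ) • y := by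
  rw [← algebraMap_smul ℂ r y, Complex.coe_algebraMap]

def toComplexSub (p : Submodule ℝ W) (h : ∀ x ∈ p, Complex.I • x ∈ p) : Submodule ℂ W where
  carrier := p
  zero_mem' := p.zero_mem
  add_mem' := fun ha hb => p.add_mem ha hb
  smul_mem' := by
    intro c x hx
    have e : c • x = c.re • x + c.im • (Complex.I • x) := by
      rw [real_smul_eq, real_smul_eq, smul_smul, ← add_smul, Complex.re_add_im]
    show c • x ∈ p
    rw [e]
    exact p.add_mem (p.smul_mem _ hx) (p.smul_mem _ (h x hx))

lemma toComplexSub_coe (p : Submodule ℝ W) (h : ∀ x ∈ p, Complex.I • x ∈ p) :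
    ((toComplexSub p h : Submodule ℂ W) : Set W) = (p : Set W) := rfl

lemma co {p q : Submodule ℝ W} (hp : ∀ y ∈ p, Complex.I • y ∈ p)
    (hro : ∀ x ∈ p, ∀ y ∈ q, (inner ℝ x y : ℝ) = 0) :
    ∀ x ∈ p, ∀ y ∈ q, (inner ℂ x y : ℂ) = 0 := fun x hx y hy =>
  inner_eq_zero_of_re _ _ (hro x hx y hy) (hro _ (hp x hx) y hy)

lemma co_symm {p q : Submodule ℝ W} (h : ∀ x ∈ p, ∀ y ∈ q, (inner ℂ x y : ℂ) = 0) :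
    ∀ x ∈ q, ∀ y ∈ p, (inner ℂ x y : ℂ) = 0 := fun x hx y hy =>
  inner_eq_zero_symm.1 (h y hy x hx)

-- the six complex orthogonality relations
lemma coQpM0 : ∀ x ∈ Qp V, ∀ y ∈ M0 V, (inner ℂ x y : ℂ) = 0 :=
  co (fun y hy => Qp_I hy) (fun x hx y hy => by
    rw [real_inner_comm]; exact roM0Qp hy hx)

lemma coQpM1 : ∀ x ∈ Qp V, ∀ y ∈ M1 V, (inner ℂ x y : ℂ) = 0 :=
  co (fun y hy => Qp_I hy) (fun x hx y hy => roQpM1 hx hy)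

lemma coQpQm : ∀ x ∈ Qp V, ∀ y ∈ Qm V, (inner ℂ x y : ℂ) = 0 :=
  co (fun y hy => Qp_I hy) (fun x hx y hy => roQpQm hx hy)

lemma coM0M1 : ∀ x ∈ M0 V, ∀ y ∈ M1 V, (inner ℂ x y : ℂ) = 0 :=
  co (fun y hy => M0_I hy) (fun x hx y hy => roM0M1 hx hy)

lemma coM0Qm : ∀ x ∈ M0 V, ∀ y ∈ Qm V, (inner ℂ x y : ℂ) = 0 :=
  co (fun y hy => M0_I hy) (fun x hx y hy => roM0Qm hx hy)

lemma coM1Qm : ∀ x ∈ M1 V, ∀ y ∈ Qm V, (inner ℂ x y : ℂ) = 0 :=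
  co (fun y hy => M1_I hy) (fun x hx y hy => by
    rw [real_inner_comm]; exact roQmM1 hy hx)

lemma eq_zero_of_rinner_self {x : W} (h : (inner ℝ x x : ℝ) = 0) : x = 0 :=
  inner_self_eq_zero.1 h

lemma V_inter_Qm : (V : Set W) ∩ (Qm V : Set W) = {0} := by
  ext x
  simp only [Set.mem_inter_iff, SetLike.mem_coe, Set.mem_singleton_iff]
  constructor
  · rintro ⟨hx, hm⟩
    exact eq_zero_of_rinner_self (Submodule.inner_left_of_mem_orthogonal hx hm.1)
  · rintro rfl
    exact ⟨V.zero_mem, (Qm V).zero_mem⟩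

lemma gp1 : ((V : Set W) ∩ (M0 V : Set W)) ∩ iSet ((V : Set W) ∩ (M0 V : Set W)) = {0} := by
  ext x
  simp only [Set.mem_inter_iff, SetLike.mem_coe, Set.mem_singleton_iff, iSet,
    Set.mem_image]
  constructor
  · rintro ⟨⟨hxV, hxM0⟩, y, ⟨⟨hyV, hyM0⟩, rfl⟩⟩
    have hQp : Complex.I • y ∈ Qp V := ⟨hxV, I_smul_mem_iSub hyV⟩
    exact eq_zero_of_rinner_self (roM0Qp hxM0 hQp)
  · rintro rfl
    exact ⟨⟨V.zero_mem, (M0 V).zero_mem⟩, 0, ⟨⟨V.zero_mem, (M0 V).zero_mem⟩, smul_zero _⟩⟩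

include hV

lemma rp0_sub :
    realPerp ((V : Set W) ∩ (M0 V : Set W)) ∩ (M0 V : Set W) ⊆ (Vᗮ : Set W) := by
  rintro z ⟨hz1, hz2⟩
  refine (Submodule.mem_orthogonal _ _).2 (fun u hu => ?_)
  obtain ⟨a, ha, b, hb, c, hc, rfl⟩ := decompV hV hu
  have e1 : (inner ℝ a z : ℝ) = 0 := by rw [real_inner_comm]; exact roM0Qp hz2 ha
  have e2 : (inner ℝ b z : ℝ) = 0 := hz1 b ⟨hb.1, hb.2⟩
  have e3 : (inner ℝ c z : ℝ) = 0 :=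
    Submodule.inner_right_of_mem_orthogonal (Q1_le_M1 hc) hz2.2
  rw [inner_add_left, inner_add_left, e1, e2, e3]
  ring

lemma gp2 :
    (realPerp ((V : Set W) ∩ (M0 V : Set W)) ∩ (M0 V : Set W)) ∩
      iSet (realPerp ((V : Set W) ∩ (M0 V : Set W)) ∩ (M0 V : Set W)) = {0} := by
  ext x
  simp only [Set.mem_inter_iff, SetLike.mem_coe, Set.mem_singleton_iff, iSet, Set.mem_image]
  constructor
  · rintro ⟨hx, y, hy, rfl⟩
    have hx' : Complex.I • y ∈ Vᗮ := rp0_sub hV hx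
    have hy' : y ∈ Vᗮ := rp0_sub hV hy
    have hQm : Complex.I • y ∈ Qm V :=
      ⟨hx', by rw [← iSub_orthogonal]; exact I_smul_mem_iSub hy'⟩
    exact eq_zero_of_rinner_self (roM0Qm hx.2 hQm)
  · rintro rfl
    have h0 : (0 : W) ∈ realPerp ((V : Set W) ∩ (M0 V : Set W)) := by
      intro v _; simp
    exact ⟨⟨h0, (M0 V).zero_mem⟩, 0, ⟨⟨h0, (M0 V).zero_mem⟩, smul_zero _⟩⟩

lemma gp3 :
    (realPerp ((V : Set W) ∩ (M0 V : Set W)) ∩ (M0 V : Set W)) ∩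
      iSet ((V : Set W) ∩ (M0 V : Set W)) = {0} := by
  ext x
  simp only [Set.mem_inter_iff, SetLike.mem_coe, Set.mem_singleton_iff, iSet, Set.mem_image]
  constructor
  · rintro ⟨hx, y, ⟨hyV, hyM0⟩, rfl⟩
    have hx' : Complex.I • y ∈ Vᗮ := rp0_sub hV hx
    have hQ1' : Complex.I • y ∈ Q1' V := ⟨I_smul_mem_iSub hyV, hx'⟩
    exact eq_zero_of_rinner_self (roM0M1 hx.2 (Q1'_le_M1 hQ1'))
  · rintro rfl
    have h0 : (0 : W) ∈ realPerp ((V : Set W) ∩ (M0 V : Set W)) := by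
      intro v _; simp
    exact ⟨⟨h0, (M0 V).zero_mem⟩, 0, ⟨⟨V.zero_mem, (M0 V).zero_mem⟩, smul_zero _⟩⟩

omit hV

lemma sup_set :
    {z : W | ∃ a ∈ (V : Set W) ∩ iSet (realPerp (V : Set W)),
      ∃ b ∈ iSet (V : Set W) ∩ realPerp (V : Set W), z = a + b} =
    ((Q1 V ⊔ Q1' V : Submodule ℝ W) : Set W) := by
  ext z
  simp only [Set.mem_setOf_eq, SetLike.mem_coe, Submodule.mem_sup]
  constructor
  · rintro ⟨a, ha, b, hb, rfl⟩
    exact ⟨a, ha, b, hb, rfl⟩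
  · rintro ⟨a, ha, b, hb, rfl⟩
    exact ⟨a, ha, b, hb, rfl⟩

lemma M1_set :
    closure {z : W | ∃ a ∈ (V : Set W) ∩ iSet (realPerp (V : Set W)),
      ∃ b ∈ iSet (V : Set W) ∩ realPerp (V : Set W), z = a + b} = (M1 V : Set W) := by
  rw [sup_set, M1, Submodule.topologicalClosure_coe]

lemma M0_set :
    realPerp ((((V : Set W) ∩ iSet (V : Set W)) ∪
        (realPerp (V : Set W) ∩ realPerp (iSet (V : Set W)))) ∪ (M1 V : Set W)) =
      (M0 V : Set W) := by
  rw [realPerp_union, realPerp_union]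
  rfl

end RSCD18

/-- Canonical decomposition of a closed real subspace `V` of a complex
Hilbert space `W`.  With `W₊ = V ∩ iV`, `W₋ = V^perp ∩ iV^perp`,
`W₁ = cl((V ∩ iV^perp) + (iV ∩ V^perp))` and `W₀ = (W₊ + W₋ + W₁)^perp`:
(i) these are closed complex subspaces and `W` is their orthogonal direct sum;
(ii) `V = W₊ ⊕ V₀ ⊕ V₁` where `V₀ = V ∩ W₀`, `V₁ = V ∩ iV^perp`, and `V ∩ W₋ = {0}`;
(iii) `V₀` is in general position inside `W₀`. -/
theorem real_subspace_canonical_decomposition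
    {W : Type*} [NormedAddCommGroup W] [InnerProductSpace ℂ W] [CompleteSpace W]
    (V : Submodule ℝ W) (hV : IsClosed (V : Set W)) :
    let Wp : Set W := (V : Set W) ∩ iSet (V : Set W)
    let Wm : Set W := realPerp (V : Set W) ∩ realPerp (iSet (V : Set W))
    let Wone : Set W := closure {z : W |
      ∃ a ∈ (V : Set W) ∩ iSet (realPerp (V : Set W)),
      ∃ b ∈ iSet (V : Set W) ∩ realPerp (V : Set W), z = a + b}
    let Wzero : Set W := realPerp (Wp ∪ Wm ∪ Wone)
    let F : Fin 4 → Set W := ![Wp, Wzero, Wone, Wm]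
    let V0 : Set W := (V : Set W) ∩ Wzero
    let V1 : Set W := (V : Set W) ∩ iSet (realPerp (V : Set W))
    let rp0 : Set W := realPerp V0 ∩ Wzero
    -- (i) closed complex subspaces, orthogonal, spanning
    (∀ i : Fin 4, IsClosed (F i) ∧ ∃ Z : Submodule ℂ W, (Z : Set W) = F i) ∧
    (∀ i j : Fin 4, i ≠ j → ∀ x ∈ F i, ∀ y ∈ F j, (inner ℂ x y : ℂ) = 0) ∧
    (∀ w : W, ∃ a ∈ F 0, ∃ b ∈ F 1, ∃ c ∈ F 2, ∃ d ∈ F 3, w = a + b + c + d) ∧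
    -- (ii) the decomposition of V
    (∀ v ∈ (V : Set W), ∃ a ∈ Wp, ∃ b ∈ V0, ∃ c ∈ V1, v = a + b + c) ∧
    (∀ a ∈ Wp, ∀ b ∈ V0, ∀ c ∈ V1, a + b + c ∈ (V : Set W)) ∧
    ((V : Set W) ∩ Wm = {0}) ∧
    -- (iii) V₀ is in general position inside W₀
    (V0 ∩ iSet V0 = {0}) ∧ (rp0 ∩ iSet rp0 = {0}) ∧ (rp0 ∩ iSet V0 = {0}) := by
  intro Wp Wm Wone Wzero F V0 V1 rp0
  have hW1 : Wone = (RSCD18.M1 V : Set W) := RSCD18.M1_set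
  have hW0 : Wzero = (RSCD18.M0 V : Set W) := by
    show realPerp (Wp ∪ Wm ∪ Wone) = _
    rw [hW1]
    exact RSCD18.M0_set
  have hV0 : V0 = (V : Set W) ∩ (RSCD18.M0 V : Set W) := by
    show (V : Set W) ∩ Wzero = _
    rw [hW0]
  have hrp0 : rp0 = realPerp ((V : Set W) ∩ (RSCD18.M0 V : Set W)) ∩ (RSCD18.M0 V : Set W) := by
    show realPerp V0 ∩ Wzero = _
    rw [hV0, hW0]
  have mz : ∀ {y : W}, y ∈ Wzero → y ∈ (RSCD18.M0 V : Set W) := fun hy => hW0 ▸ hy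
  have m1 : ∀ {y : W}, y ∈ Wone → y ∈ (RSCD18.M1 V : Set W) := fun hy => hW1 ▸ hy
  refine ⟨?_, ?_, ?_, ?_, ?_, ?_, ?_, ?_, ?_⟩
  · intro i
    fin_cases i
    · exact ⟨RSCD18.isClosed_Qp hV,
        ⟨RSCD18.toComplexSub _ (fun y hy => RSCD18.Qp_I hy), rfl⟩⟩
    · show IsClosed Wzero ∧ ∃ Z : Submodule ℂ W, (Z : Set W) = Wzero
      rw [hW0]
      exact ⟨RSCD18.isClosed_M0,
        ⟨RSCD18.toComplexSub _ (fun y hy => RSCD18.M0_I hy), rfl⟩⟩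
    · show IsClosed Wone ∧ ∃ Z : Submodule ℂ W, (Z : Set W) = Wone
      rw [hW1]
      exact ⟨RSCD18.isClosed_M1,
        ⟨RSCD18.toComplexSub _ (fun y hy => RSCD18.M1_I hy), rfl⟩⟩
    · exact ⟨RSCD18.isClosed_Qm,
        ⟨RSCD18.toComplexSub _ (fun y hy => RSCD18.Qm_I hy), rfl⟩⟩
  · intro i j hij x hx y hy
    fin_cases i <;> fin_cases j
    · exact absurd rfl hij
    · exact RSCD18.coQpM0 x hx y (mz hy)
    · exact RSCD18.coQpM1 x hx y (m1 hy)
    · exact RSCD18.coQpQm x hx y hy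
    · exact RSCD18.co_symm RSCD18.coQpM0 x (mz hx) y hy
    · exact absurd rfl hij
    · exact RSCD18.coM0M1 x (mz hx) y (m1 hy)
    · exact RSCD18.coM0Qm x (mz hx) y hy
    · exact RSCD18.co_symm RSCD18.coQpM1 x (m1 hx) y hy
    · exact RSCD18.co_symm RSCD18.coM0M1 x (m1 hx) y (mz hy)
    · exact absurd rfl hij
    · exact RSCD18.coM1Qm x (m1 hx) y hy
    · exact RSCD18.co_symm RSCD18.coQpQm x hx y hy
    · exact RSCD18.co_symm RSCD18.coM0Qm x hx y (mz hy)
    · exact RSCD18.co_symm RSCD18.coM1Qm x hx y (m1 hy)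
    · exact absurd rfl hij
  · intro w
    obtain ⟨a, ha, b, hb, c, hc, d, hd, e⟩ := RSCD18.span4 hV w
    refine ⟨a, ha, b, ?_, c, ?_, d, hd, e⟩
    · show b ∈ Wzero
      rw [hW0]; exact hb
    · show c ∈ Wone
      rw [hW1]; exact hc
  · intro v hv
    obtain ⟨a, ha, b, hb, c, hc, e⟩ := RSCD18.decompV hV hv
    refine ⟨a, ha, b, ⟨hb.1, ?_⟩, c, hc, e⟩
    show b ∈ Wzero
    rw [hW0]; exact hb.2
  · intro a ha b hb c hc
    exact V.add_mem (V.add_mem ha.1 hb.1) hc.1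
  · exact RSCD18.V_inter_Qm
  · rw [hV0]
    exact RSCD18.gp1
  · rw [hrp0]
    exact RSCD18.gp2 hV
  · rw [hrp0, hV0]
    exact RSCD18.gp3 hV
end
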